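/- arXiv:2511.09500 — 2 statements merged into one kernel-verified Lean document; each statement's English description precedes it below -/
import Mathlib

section
/- First-order expansion of the derivatives of the noisy density: Assume p satisfies the smoothness assumption S(4), and Z has a density φ, is symmetric about 0, and satisfies the moment assumption N(i). For η ∈ (0,1) let q_η(y) = ∫_{ℝ^d} p(y − √(2η)·z) φ(z) dz. Then there exists a constant C > 0 such that for all η ∈ (0,1): sup_{y∈ℝ^d} ‖∇q_η(y) − ∇p(y)‖ ≤ C·η and sup_{y∈ℝ^d} |Δq_η(y) − Δp(y)| ≤ C·η. -/
open MeasureTheory Real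

noncomputable section

/-- Partial derivative of `h` in coordinate `i`. -/
def pd {d : ℕ} (i : Fin d) (h : (Fin d → ℝ) → ℝ) (y : Fin d → ℝ) : ℝ :=
  fderiv ℝ h y (Pi.single i 1)

/-- Iterated partial derivative along a list of coordinate indices. -/
def pdl {d : ℕ} (l : List (Fin d)) (h : (Fin d → ℝ) → ℝ) : (Fin d → ℝ) → ℝ :=
  l.foldr (fun i acc => pd i acc) h

/-- Gradient vector. -/
def grad {d : ℕ} (h : (Fin d → ℝ) → ℝ) (y : Fin d → ℝ) : Fin d → ℝ :=
  fun i => pd i h y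

/-- Hessian matrix. -/
def hess {d : ℕ} (h : (Fin d → ℝ) → ℝ) (y : Fin d → ℝ) : Matrix (Fin d) (Fin d) ℝ :=
  Matrix.of fun i j => pd i (pd j h) y

/-- Laplacian. -/
def lap {d : ℕ} (h : (Fin d → ℝ) → ℝ) (y : Fin d → ℝ) : ℝ :=
  ∑ i, pd i (pd i h) y

/-- Euclidean norm on `Fin d → ℝ`. -/
def eunorm {d : ℕ} (v : Fin d → ℝ) : ℝ :=
  Real.sqrt (∑ i, v i ^ 2)

/-- Frobenius norm of a matrix. -/
def fnorm {d : ℕ} (A : Matrix (Fin d) (Fin d) ℝ) : ℝ :=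
  Real.sqrt (∑ i, ∑ j, A i j ^ 2)

/-- Sup (ℓ∞) norm on `Fin d → ℝ`. -/
def supnorm {d : ℕ} (v : Fin d → ℝ) : ℝ :=
  ⨆ i, |v i|

/-- Smoothness assumption `S(k)`: `p` is `C^k` and all of its iterated partial
derivatives of order at most `k` are uniformly bounded. -/
def SmoothS {d : ℕ} (k : ℕ) (p : (Fin d → ℝ) → ℝ) : Prop :=
  ContDiff ℝ k p ∧
    ∀ l : List (Fin d), l.length ≤ k → ∃ M : ℝ, ∀ x, |pdl l p x| ≤ M

/-- The class `M²(ℝ^d)` of 2-smooth test functions. -/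
def TestM2 {d : ℕ} (m : (Fin d → ℝ) → ℝ) : Prop :=
  ContDiff ℝ 2 m ∧ (∃ M : ℝ, ∀ y i j, |pd i (pd j m) y| ≤ M) ∧
    Integrable m ∧ Integrable (fun y => supnorm (grad m y))

/-- The class `M³(ℝ^d)` of 3-smooth test functions. -/
def TestM3 {d : ℕ} (m : (Fin d → ℝ) → ℝ) : Prop :=
  ContDiff ℝ 3 m ∧ (∃ M : ℝ, ∀ y i j k, |pd i (pd j (pd k m)) y| ≤ M) ∧
    Integrable m ∧ Integrable (fun y => supnorm (grad m y))

namespace CAux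

variable {d : ℕ}

lemma opnorm_le_sum {E : Type*} [NormedAddCommGroup E] [NormedSpace ℝ E]
    (L : (Fin d → ℝ) →L[ℝ] E) :
    ‖L‖ ≤ ∑ i, ‖L (Pi.single i 1)‖ := by
  refine ContinuousLinearMap.opNorm_le_bound _
    (Finset.sum_nonneg fun i _ => norm_nonneg _) ?_
  intro v
  have hv : v = ∑ i, v i • (Pi.single i 1 : Fin d → ℝ) := by
    funext j
    simp [Finset.sum_apply, Pi.single_apply]
  calc ‖L v‖ = ‖∑ i, v i • L (Pi.single i 1)‖ := by
        conv_lhs => rw [hv]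
        rw [map_sum]
        simp [_root_.map_smul]
    _ ≤ ∑ i, ‖v i • L (Pi.single i 1)‖ := norm_sum_le _ _
    _ ≤ ∑ i, ‖L (Pi.single i 1)‖ * ‖v‖ := by
        refine Finset.sum_le_sum fun i _ => ?_
        rw [norm_smul, mul_comm]
        exact mul_le_mul_of_nonneg_left (norm_le_pi_norm v i) (norm_nonneg _)
    _ = (∑ i, ‖L (Pi.single i 1)‖) * ‖v‖ := by rw [Finset.sum_mul]

lemma opnorm2_le_sum (L : (Fin d → ℝ) →L[ℝ] ((Fin d → ℝ) →L[ℝ] ℝ)) :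
    ‖L‖ ≤ ∑ i, ∑ j, |(L (Pi.single i 1)) (Pi.single j 1)| := by
  refine (opnorm_le_sum L).trans (Finset.sum_le_sum fun i _ => ?_)
  simpa [Real.norm_eq_abs] using opnorm_le_sum (L (Pi.single i 1))

lemma lip_of_fderiv_bound {E F : Type*} [NormedAddCommGroup E] [NormedSpace ℝ E]
    [NormedAddCommGroup F] [NormedSpace ℝ F]
    (f : E → F) (hf : Differentiable ℝ f) (B : ℝ) (hB : ∀ x, ‖fderiv ℝ f x‖ ≤ B)
    (a b : E) : ‖f a - f b‖ ≤ B * ‖a - b‖ :=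
  Convex.norm_image_sub_le_of_norm_fderiv_le (fun x _ => hf.differentiableAt)
    (fun x _ => hB x) convex_univ (Set.mem_univ b) (Set.mem_univ a)

lemma sym_quad {E : Type*} [NormedAddCommGroup E] [NormedSpace ℝ E]
    (g : E → ℝ) (hg : Differentiable ℝ g) (B : ℝ) (hB0 : 0 ≤ B)
    (hlip : ∀ a b, ‖fderiv ℝ g a - fderiv ℝ g b‖ ≤ B * ‖a - b‖)
    (y v : E) : |g (y + v) + g (y - v) - 2 * g y| ≤ 2 * B * ‖v‖ ^ 2 := by
  have key : ∀ w : E, ‖w‖ ≤ ‖v‖ →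
      |g (y + w) - g y - fderiv ℝ g y w| ≤ (B * ‖v‖) * ‖v‖ := by
    intro w hw
    have seg : ∀ x ∈ segment ℝ y (y + w), ‖x - y‖ ≤ ‖v‖ := by
      intro x hx
      rw [segment_eq_image'] at hx
      obtain ⟨t, ht, rfl⟩ := hx
      simp only [add_sub_cancel_left]
      rw [norm_smul]
      calc ‖t‖ * ‖w‖
          ≤ 1 * ‖v‖ := by
            apply mul_le_mul _ hw (norm_nonneg _) zero_le_one
            rw [Real.norm_eq_abs, abs_le]; constructor <;> linarith [ht.1, ht.2]
        _ = ‖v‖ := one_mul _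
    have h := Convex.norm_image_sub_le_of_norm_fderiv_le'
      (f := g) (φ := fderiv ℝ g y) (s := segment ℝ y (y + w)) (C := B * ‖v‖)
      (fun x _ => hg.differentiableAt)
      (fun x hx => (hlip x y).trans (mul_le_mul_of_nonneg_left (seg x hx) hB0))
      (convex_segment _ _) (left_mem_segment ℝ y (y + w)) (right_mem_segment ℝ y (y + w))
    rw [add_sub_cancel_left] at h
    calc |g (y + w) - g y - fderiv ℝ g y w| ≤ (B * ‖v‖) * ‖w‖ := h
      _ ≤ (B * ‖v‖) * ‖v‖ :=
          mul_le_mul_of_nonneg_left hw (mul_nonneg hB0 (norm_nonneg _))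
  have h1 := key v le_rfl
  have h2 := key (-v) (by simp)
  rw [map_neg] at h2
  have hyv : y - v = y + -v := sub_eq_add_neg y v
  rw [← hyv] at h2
  have hsplit : g (y + v) + g (y - v) - 2 * g y
      = (g (y + v) - g y - fderiv ℝ g y v) + (g (y - v) - g y - -(fderiv ℝ g y v)) := by
    ring
  rw [hsplit]
  calc |(g (y + v) - g y - fderiv ℝ g y v) + (g (y - v) - g y - -(fderiv ℝ g y v))|
      ≤ |g (y + v) - g y - fderiv ℝ g y v| + |g (y - v) - g y - -(fderiv ℝ g y v)| :=
        abs_add_le _ _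
    _ ≤ (B * ‖v‖) * ‖v‖ + (B * ‖v‖) * ‖v‖ := add_le_add h1 h2
    _ = 2 * B * ‖v‖ ^ 2 := by ring

lemma contDiff_pd (n : ℕ) (i : Fin d) {g : (Fin d → ℝ) → ℝ}
    (hg : ContDiff ℝ (n + 1 : ℕ) g) : ContDiff ℝ n (pd i g) := by
  have h1 : ContDiff ℝ n (fderiv ℝ g) := by
    apply hg.fderiv_right
    exact_mod_cast le_refl ((n : ℕ∞) + 1)
  exact (ContinuousLinearMap.apply ℝ ℝ (Pi.single i 1)).contDiff.comp h1

lemma hasFDerivAt_pd (j : Fin d) {g : (Fin d → ℝ) → ℝ} (hg : ContDiff ℝ 2 g)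
    (x : Fin d → ℝ) :
    HasFDerivAt (pd j g)
      ((ContinuousLinearMap.apply ℝ ℝ (Pi.single j 1)).comp
        (fderiv ℝ (fderiv ℝ g) x)) x := by
  have h1 : ContDiff ℝ 1 (fderiv ℝ g) := hg.fderiv_right (by norm_num)
  have h2 : HasFDerivAt (fderiv ℝ g) (fderiv ℝ (fderiv ℝ g) x) x :=
    ((h1.differentiable (by norm_num)) x).hasFDerivAt
  exact (ContinuousLinearMap.apply ℝ ℝ (Pi.single j 1)).hasFDerivAt.comp x h2

lemma pd_pd_eq (i j : Fin d) {g : (Fin d → ℝ) → ℝ} (hg : ContDiff ℝ 2 g)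
    (x : Fin d → ℝ) :
    pd i (pd j g) x
      = fderiv ℝ (fderiv ℝ g) x (Pi.single i 1) (Pi.single j 1) := by
  have h3 := hasFDerivAt_pd j hg x
  rw [pd, h3.fderiv]
  rfl

lemma pd_conv (g : (Fin d → ℝ) → ℝ) (hg : ContDiff ℝ 1 g) (M : ℝ)
    (hgM : ∀ x, |g x| ≤ M) (hg'M : ∀ x, ‖fderiv ℝ g x‖ ≤ M)
    (φ : (Fin d → ℝ) → ℝ) (hφ0 : ∀ z, 0 ≤ φ z) (hφi : Integrable φ)
    (ε : ℝ) (i : Fin d) (y : Fin d → ℝ) :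
    pd i (fun y' => ∫ z, g (y' - ε • z) * φ z) y
      = ∫ z, pd i g (y - ε • z) * φ z := by
  set F' : (Fin d → ℝ) → (Fin d → ℝ) → ((Fin d → ℝ) →L[ℝ] ℝ) :=
    fun x z => φ z • fderiv ℝ g (x - ε • z) with hF'
  have hgd : Differentiable ℝ g := hg.differentiable (by norm_num)
  have hcont : Continuous g := hg.continuous
  have hcont' : Continuous (fderiv ℝ g) := hg.continuous_fderiv (by norm_num)
  have haff : ∀ x : Fin d → ℝ, Continuous fun z : Fin d → ℝ => x - ε • z := by
    intro x; continuity
  have hdiff : ∀ z : Fin d → ℝ, ∀ x : Fin d → ℝ,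
      HasFDerivAt (fun x' => g (x' - ε • z) * φ z) (F' x z) x := by
    intro z x
    have h1 : HasFDerivAt (fun x' : Fin d → ℝ => x' - ε • z)
        (ContinuousLinearMap.id ℝ (Fin d → ℝ)) x := (hasFDerivAt_id x).sub_const _
    have h2 := ((hgd (x - ε • z)).hasFDerivAt).comp x h1
    rw [ContinuousLinearMap.comp_id] at h2
    simpa [hF', smul_eq_mul, mul_comm] using h2.mul_const (φ z)
  have hmeas : ∀ x : Fin d → ℝ,
      AEStronglyMeasurable (fun z => g (x - ε • z) * φ z) volume := by
    intro x
    exact ((hcont.comp (haff x)).aestronglyMeasurable).mul hφi.aestronglyMeasurable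
  have hint : ∀ x : Fin d → ℝ, Integrable (fun z => g (x - ε • z) * φ z) := by
    intro x
    exact hφi.bdd_mul ((hcont.comp (haff x)).aestronglyMeasurable)
      (c := M) (Filter.Eventually.of_forall fun z => by simpa [Real.norm_eq_abs] using hgM _)
  have hnorm : ∀ x z : Fin d → ℝ, ‖F' x z‖ ≤ M * φ z := by
    intro x z
    show ‖φ z • fderiv ℝ g (x - ε • z)‖ ≤ M * φ z
    rw [norm_smul, Real.norm_eq_abs, abs_of_nonneg (hφ0 z), mul_comm]
    exact mul_le_mul_of_nonneg_right (hg'M _) (hφ0 z)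
  have hF'int : Integrable (F' y) := by
    refine Integrable.mono' (hφi.const_mul M) ?_ ?_
    · exact hφi.aestronglyMeasurable.smul
        ((hcont'.comp (haff y)).aestronglyMeasurable)
    · filter_upwards with z using hnorm y z
  have key : HasFDerivAt (fun x => ∫ z, g (x - ε • z) * φ z)
      (∫ z, F' y z) y := by
    apply hasFDerivAt_integral_of_dominated_of_fderiv_le
      (F' := F') (bound := fun z => M * φ z) (Metric.ball_mem_nhds y one_pos)
    · filter_upwards with x using hmeas x
    · exact hint y
    · exact hφi.aestronglyMeasurable.smul
        ((hcont'.comp (haff y)).aestronglyMeasurable)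
    · filter_upwards with z
      intro x _
      exact hnorm x z
    · exact hφi.const_mul M
    · filter_upwards with z
      intro x _
      exact hdiff z x
  rw [pd, key.fderiv, ContinuousLinearMap.integral_apply hF'int]
  congr 1
  funext z
  rw [hF']
  simp [pd, mul_comm]

lemma pinorm_sq_le (z : Fin d → ℝ) : ‖z‖ ^ 2 ≤ ∑ i, z i ^ 2 := by
  have hs : (0 : ℝ) ≤ ∑ i, z i ^ 2 := Finset.sum_nonneg fun i _ => sq_nonneg _
  have hz : ‖z‖ ≤ Real.sqrt (∑ i, z i ^ 2) := by
    rw [pi_norm_le_iff_of_nonneg (Real.sqrt_nonneg _)]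
    intro i
    rw [Real.norm_eq_abs, ← Real.sqrt_sq_eq_abs]
    exact Real.sqrt_le_sqrt
      (Finset.single_le_sum (f := fun i => z i ^ 2) (fun i _ => sq_nonneg _)
        (Finset.mem_univ i))
  calc ‖z‖ ^ 2 ≤ Real.sqrt (∑ i, z i ^ 2) ^ 2 :=
        pow_le_pow_left₀ (norm_nonneg _) hz 2
    _ = ∑ i, z i ^ 2 := Real.sq_sqrt hs

lemma conv_sub_bound (g : (Fin d → ℝ) → ℝ) (hg : Differentiable ℝ g) (M B : ℝ)
    (hB0 : 0 ≤ B) (hgM : ∀ x, |g x| ≤ M)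
    (hlip : ∀ a b, ‖fderiv ℝ g a - fderiv ℝ g b‖ ≤ B * ‖a - b‖)
    (φ : (Fin d → ℝ) → ℝ) (hφ0 : ∀ z, 0 ≤ φ z) (hφi : Integrable φ)
    (hφ1 : (∫ z, φ z) = 1) (hφsym : ∀ z, φ (-z) = φ z)
    (hK : Integrable (fun z => (∑ i, z i ^ 2) * φ z))
    (ε : ℝ) (y : Fin d → ℝ) :
    |(∫ z, g (y - ε • z) * φ z) - g y|
      ≤ B * ε ^ 2 * ∫ z, (∑ i, z i ^ 2) * φ z := by
  have hcont : Continuous g := hg.continuous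
  have haff : ∀ c : ℝ, Continuous fun z : Fin d → ℝ => y + c • z := by
    intro c; continuity
  have hint : ∀ c : ℝ, Integrable (fun z => g (y + c • z) * φ z) := by
    intro c
    exact hφi.bdd_mul ((hcont.comp (haff c)).aestronglyMeasurable)
      (c := M) (Filter.Eventually.of_forall fun z => by simpa [Real.norm_eq_abs] using hgM _)
  have hrw : ∀ c : ℝ, (fun z : Fin d → ℝ => g (y - c • z) * φ z)
      = fun z => g (y + (-c) • z) * φ z := by
    intro c; funext z; rw [neg_smul, ← sub_eq_add_neg]
  have int1 : Integrable (fun z => g (y - ε • z) * φ z) := by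
    rw [hrw]; exact hint (-ε)
  have int2 : Integrable (fun z => g (y + ε • z) * φ z) := hint ε
  have hneg : (∫ z, g (y - ε • z) * φ z) = ∫ z, g (y + ε • z) * φ z := by
    calc (∫ z, g (y - ε • z) * φ z)
        = ∫ z, g (y + ε • (-z)) * φ (-z) := by
          congr 1; funext z; rw [hφsym, smul_neg, ← sub_eq_add_neg]
      _ = ∫ z, g (y + ε • z) * φ z :=
          integral_neg_eq_self (fun z => g (y + ε • z) * φ z) volume
  have expand : (∫ z, g (y - ε • z) * φ z) - g y
      = ∫ z, ((g (y - ε • z) + g (y + ε • z) - 2 * g y) / 2) * φ z := by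
    have ha : Integrable (fun z : Fin d → ℝ =>
        (1 / 2) * (g (y - ε • z) * φ z) + (1 / 2) * (g (y + ε • z) * φ z)) :=
      (int1.const_mul _).add (int2.const_mul _)
    have hb : Integrable (fun z : Fin d → ℝ => g y * φ z) := hφi.const_mul (g y)
    rw [show (fun z : Fin d → ℝ => ((g (y - ε • z) + g (y + ε • z) - 2 * g y) / 2) * φ z)
        = fun z => ((1 / 2) * (g (y - ε • z) * φ z) + (1 / 2) * (g (y + ε • z) * φ z))
          - g y * φ z from funext fun z => by ring]
    rw [integral_sub ha hb,
      integral_add (int1.const_mul _) (int2.const_mul _),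
      integral_const_mul, integral_const_mul, integral_const_mul, hφ1, hneg]
    ring
  rw [expand]
  have bptw : ∀ z : Fin d → ℝ,
      ‖((g (y - ε • z) + g (y + ε • z) - 2 * g y) / 2) * φ z‖
        ≤ B * ε ^ 2 * ((∑ i, z i ^ 2) * φ z) := by
    intro z
    have h := sym_quad g hg B hB0 hlip y (ε • z)
    have hn2 : ‖ε • z‖ ^ 2 ≤ ε ^ 2 * ∑ i, z i ^ 2 := by
      rw [norm_smul, mul_pow, Real.norm_eq_abs, sq_abs]
      exact mul_le_mul_of_nonneg_left (pinorm_sq_le z) (sq_nonneg ε)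
    rw [Real.norm_eq_abs, abs_mul, abs_of_nonneg (hφ0 z)]
    rw [show (g (y - ε • z) + g (y + ε • z) - 2 * g y) / 2
      = (g (y + ε • z) + g (y - ε • z) - 2 * g y) / 2 from by ring]
    rw [abs_div, abs_two]
    calc |g (y + ε • z) + g (y - ε • z) - 2 * g y| / 2 * φ z
        ≤ (2 * B * ‖ε • z‖ ^ 2) / 2 * φ z := by
          apply mul_le_mul_of_nonneg_right _ (hφ0 z)
          linarith [h]
      _ = B * ‖ε • z‖ ^ 2 * φ z := by ring
      _ ≤ B * (ε ^ 2 * ∑ i, z i ^ 2) * φ z := by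
          apply mul_le_mul_of_nonneg_right _ (hφ0 z)
          exact mul_le_mul_of_nonneg_left hn2 hB0
      _ = B * ε ^ 2 * ((∑ i, z i ^ 2) * φ z) := by ring
  calc |∫ z, ((g (y - ε • z) + g (y + ε • z) - 2 * g y) / 2) * φ z|
      ≤ ∫ z, B * ε ^ 2 * ((∑ i, z i ^ 2) * φ z) :=
        norm_integral_le_of_norm_le (hK.const_mul _)
          (Filter.Eventually.of_forall bptw)
    _ = B * ε ^ 2 * ∫ z, (∑ i, z i ^ 2) * φ z := integral_const_mul _ _

end CAux

open CAux

/-- First-order expansion of the derivatives of the noisy density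
`q_η(y) = ∫ p(y - √(2η) z) φ(z) dz`:
`sup_y ‖∇q_η(y) - ∇p(y)‖ ≤ C η` and `sup_y |Δq_η(y) - Δp(y)| ≤ C η`. -/
theorem convolution_expansion_derivatives_first_order
    {d : ℕ} (hd : 0 < d)
    (p φ : (Fin d → ℝ) → ℝ)
    (hp0 : ∀ x, 0 ≤ p x) (hp1 : (∫ x, p x) = 1)
    (hφ0 : ∀ z, 0 ≤ φ z) (hφ1 : (∫ z, φ z) = 1)
    (hφsym : ∀ z, φ (-z) = φ z)
    (hS : SmoothS 4 p)
    (hmom2 : ∀ i j, (∫ z, z i * z j * φ z) = if i = j then (1 : ℝ) else 0)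
    (hmom4 : ∀ i, Integrable fun z => |z i| ^ 4 * φ z)
 :
    ∃ C > (0 : ℝ), ∀ η ∈ Set.Ioo (0 : ℝ) 1, ∀ y : Fin d → ℝ,
      eunorm (grad (fun y' => ∫ z, p (y' - Real.sqrt (2 * η) • z) * φ z) y -
          grad p y) ≤ C * η ∧
      |lap (fun y' => ∫ z, p (y' - Real.sqrt (2 * η) • z) * φ z) y - lap p y| ≤
        C * η := by
  obtain ⟨hp4, hbd⟩ := hS
  have hp4' : ContDiff ℝ ((3 + 1 : ℕ) : ℕ∞) p := by exact_mod_cast hp4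
  -- φ is integrable
  have hφi : Integrable φ := by
    by_contra h
    rw [integral_undef h] at hφ1
    norm_num at hφ1
  -- second moment integrability
  have hKint : Integrable (fun z : Fin d → ℝ => (∑ i, z i ^ 2) * φ z) := by
    have hone : ∀ i : Fin d, Integrable (fun z : Fin d → ℝ => z i ^ 2 * φ z) := by
      intro i
      refine ((hφi.add (hmom4 i)).mono' ?_ ?_)
      · exact (((continuous_apply i).pow 2).aestronglyMeasurable).mul
          hφi.aestronglyMeasurable
      · filter_upwards with z
        have h1 : z i ^ 2 ≤ 1 + |z i| ^ 4 := by nlinarith [sq_abs (z i), sq_nonneg (z i ^ 2 - 1)]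
        have h2 : ‖z i ^ 2 * φ z‖ = z i ^ 2 * φ z := by
          rw [Real.norm_eq_abs, abs_mul, abs_of_nonneg (sq_nonneg _), abs_of_nonneg (hφ0 z)]
        rw [h2]
        calc z i ^ 2 * φ z ≤ (1 + |z i| ^ 4) * φ z :=
              mul_le_mul_of_nonneg_right h1 (hφ0 z)
          _ = φ z + |z i| ^ 4 * φ z := by ring
    have := integrable_finset_sum (μ := volume) Finset.univ
      (fun i (_ : i ∈ Finset.univ) => hone i)
    simpa [Finset.sum_mul] using this
  obtain ⟨K, hKdef⟩ : ∃ K : ℝ, K = ∫ z : Fin d → ℝ, (∑ i, z i ^ 2) * φ z := ⟨_, rfl⟩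
  have hK0 : 0 ≤ K := hKdef ▸ (integral_nonneg fun z =>
    mul_nonneg (Finset.sum_nonneg fun i _ => sq_nonneg _) (hφ0 z))
  -- derivative bounds
  obtain ⟨c0, hc0⟩ := hbd [] (by norm_num)
  choose c1 hc1 using fun i => hbd [i] (by norm_num)
  choose c2 hc2 using fun i j => hbd [i, j] (by norm_num)
  choose c3 hc3 using fun i j k => hbd [i, j, k] (by norm_num)
  choose c4 hc4 using fun i j k l => hbd [i, j, k, l] (by norm_num)
  obtain ⟨A1, hA1def⟩ : ∃ A : ℝ, A = ∑ i, |c1 i| := ⟨_, rfl⟩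
  obtain ⟨A2, hA2def⟩ : ∃ A : ℝ, A = ∑ i, ∑ j, |c2 i j| := ⟨_, rfl⟩
  obtain ⟨A3, hA3def⟩ : ∃ A : ℝ, A = ∑ i, ∑ j, ∑ k, |c3 i j k| := ⟨_, rfl⟩
  obtain ⟨A4, hA4def⟩ : ∃ A : ℝ, A = ∑ i, ∑ j, ∑ k, ∑ l, |c4 i j k l| := ⟨_, rfl⟩
  have hA1n : 0 ≤ A1 := hA1def ▸ (Finset.sum_nonneg fun _ _ => abs_nonneg _)
  have hA2n : 0 ≤ A2 := hA2def ▸ (Finset.sum_nonneg fun _ _ =>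
    Finset.sum_nonneg fun _ _ => abs_nonneg _)
  have hA3n : 0 ≤ A3 := hA3def ▸ (Finset.sum_nonneg fun _ _ =>
    Finset.sum_nonneg fun _ _ => Finset.sum_nonneg fun _ _ => abs_nonneg _)
  have hA4n : 0 ≤ A4 := hA4def ▸ (Finset.sum_nonneg fun _ _ => Finset.sum_nonneg fun _ _ =>
    Finset.sum_nonneg fun _ _ => Finset.sum_nonneg fun _ _ => abs_nonneg _)
  have hA1 : ∀ (i : Fin d) x, |pd i p x| ≤ A1 := by
    intro i x
    calc |pd i p x| ≤ c1 i := hc1 i x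
      _ ≤ |c1 i| := le_abs_self _
      _ ≤ A1 := hA1def ▸ Finset.single_le_sum (f := fun i => |c1 i|)
          (fun _ _ => abs_nonneg _) (Finset.mem_univ i)
  have hA2 : ∀ (i j : Fin d) x, |pd i (pd j p) x| ≤ A2 := by
    intro i j x
    calc |pd i (pd j p) x| ≤ c2 i j := hc2 i j x
      _ ≤ |c2 i j| := le_abs_self _
      _ ≤ ∑ j', |c2 i j'| := Finset.single_le_sum (f := fun j' => |c2 i j'|)
          (fun _ _ => abs_nonneg _) (Finset.mem_univ j)
      _ ≤ A2 := hA2def ▸ Finset.single_le_sum (f := fun i' => ∑ j', |c2 i' j'|)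
          (fun _ _ => Finset.sum_nonneg fun _ _ => abs_nonneg _) (Finset.mem_univ i)
  have hA3 : ∀ (i j k : Fin d) x, |pd i (pd j (pd k p)) x| ≤ A3 := by
    intro i j k x
    calc |pd i (pd j (pd k p)) x| ≤ c3 i j k := hc3 i j k x
      _ ≤ |c3 i j k| := le_abs_self _
      _ ≤ ∑ k', |c3 i j k'| := Finset.single_le_sum (f := fun k' => |c3 i j k'|)
          (fun _ _ => abs_nonneg _) (Finset.mem_univ k)
      _ ≤ ∑ j', ∑ k', |c3 i j' k'| := Finset.single_le_sum
          (f := fun j' => ∑ k', |c3 i j' k'|)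
          (fun _ _ => Finset.sum_nonneg fun _ _ => abs_nonneg _) (Finset.mem_univ j)
      _ ≤ A3 := hA3def ▸ Finset.single_le_sum (f := fun i' => ∑ j', ∑ k', |c3 i' j' k'|)
          (fun _ _ => Finset.sum_nonneg fun _ _ =>
            Finset.sum_nonneg fun _ _ => abs_nonneg _) (Finset.mem_univ i)
  have hA4 : ∀ (i j k l : Fin d) x, |pd i (pd j (pd k (pd l p))) x| ≤ A4 := by
    intro i j k l x
    calc |pd i (pd j (pd k (pd l p))) x| ≤ c4 i j k l := hc4 i j k l x
      _ ≤ |c4 i j k l| := le_abs_self _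
      _ ≤ ∑ l', |c4 i j k l'| := Finset.single_le_sum (f := fun l' => |c4 i j k l'|)
          (fun _ _ => abs_nonneg _) (Finset.mem_univ l)
      _ ≤ ∑ k', ∑ l', |c4 i j k' l'| := Finset.single_le_sum
          (f := fun k' => ∑ l', |c4 i j k' l'|)
          (fun _ _ => Finset.sum_nonneg fun _ _ => abs_nonneg _) (Finset.mem_univ k)
      _ ≤ ∑ j', ∑ k', ∑ l', |c4 i j' k' l'| := Finset.single_le_sum
          (f := fun j' => ∑ k', ∑ l', |c4 i j' k' l'|)
          (fun _ _ => Finset.sum_nonneg fun _ _ =>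
            Finset.sum_nonneg fun _ _ => abs_nonneg _) (Finset.mem_univ j)
      _ ≤ A4 := hA4def ▸ Finset.single_le_sum
          (f := fun i' => ∑ j', ∑ k', ∑ l', |c4 i' j' k' l'|)
          (fun _ _ => Finset.sum_nonneg fun _ _ => Finset.sum_nonneg fun _ _ =>
            Finset.sum_nonneg fun _ _ => abs_nonneg _) (Finset.mem_univ i)
  obtain ⟨Mb, hMbdef⟩ : ∃ M : ℝ, M = |c0| + A1 + A2 + A3 + A4 + (d : ℝ) * A1
      + (d : ℝ) * A2 + (d : ℝ) ^ 2 * A3 + (d : ℝ) ^ 2 * A4 := ⟨_, rfl⟩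
  have hdn : (0 : ℝ) ≤ (d : ℝ) := Nat.cast_nonneg d
  have hd2n : (0 : ℝ) ≤ (d : ℝ) ^ 2 := sq_nonneg _
  have hMb0 : 0 ≤ Mb := by
    rw [hMbdef]
    have := abs_nonneg c0
    have := mul_nonneg hdn hA1n
    have := mul_nonneg hdn hA2n
    have := mul_nonneg hd2n hA3n
    have := mul_nonneg hd2n hA4n
    linarith
  have hMbge : ∀ t ∈ ({|c0|, A1, A2, A3, A4, (d:ℝ)*A1, (d:ℝ)*A2,
      (d:ℝ)^2*A3, (d:ℝ)^2*A4} : Set ℝ), t ≤ Mb := by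
    intro t ht
    have h0 := abs_nonneg c0
    have h5 := mul_nonneg hdn hA1n
    have h6 := mul_nonneg hdn hA2n
    have h7 := mul_nonneg hd2n hA3n
    have h8 := mul_nonneg hd2n hA4n
    simp only [Set.mem_insert_iff, Set.mem_singleton_iff] at ht
    rw [hMbdef]
    rcases ht with rfl|rfl|rfl|rfl|rfl|rfl|rfl|rfl|rfl <;> linarith
  -- smoothness of partial derivatives
  have hC3 : ∀ i : Fin d, ContDiff ℝ (3 : ℕ) (pd i p) := fun i => contDiff_pd 3 i hp4'
  have hC2' : ∀ i j : Fin d, ContDiff ℝ (2 : ℕ) (pd i (pd j p)) := by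
    intro i j
    exact contDiff_pd 2 i (by exact_mod_cast hC3 j)
  -- operator norm bounds
  have hgradp : ∀ x, ‖fderiv ℝ p x‖ ≤ Mb := by
    intro x
    calc ‖fderiv ℝ p x‖ ≤ ∑ i, ‖fderiv ℝ p x (Pi.single i 1)‖ := opnorm_le_sum _
      _ ≤ ∑ _i : Fin d, A1 := Finset.sum_le_sum fun i _ => by
          rw [Real.norm_eq_abs]; exact hA1 i x
      _ = (d : ℝ) * A1 := by
          rw [Finset.sum_const, Finset.card_univ, Fintype.card_fin, nsmul_eq_mul]
      _ ≤ Mb := hMbge _ (by simp)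
  have hgrad1 : ∀ (i : Fin d) x, ‖fderiv ℝ (pd i p) x‖ ≤ Mb := by
    intro i x
    calc ‖fderiv ℝ (pd i p) x‖ ≤ ∑ j, ‖fderiv ℝ (pd i p) x (Pi.single j 1)‖ :=
          opnorm_le_sum _
      _ ≤ ∑ _j : Fin d, A2 := Finset.sum_le_sum fun j _ => by
          rw [Real.norm_eq_abs]; exact hA2 j i x
      _ = (d : ℝ) * A2 := by
          rw [Finset.sum_const, Finset.card_univ, Fintype.card_fin, nsmul_eq_mul]
      _ ≤ Mb := hMbge _ (by simp)
  have hgrad2 : ∀ (i j : Fin d) x, ‖fderiv ℝ (pd i (pd j p)) x‖ ≤ Mb := by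
    intro i j x
    calc ‖fderiv ℝ (pd i (pd j p)) x‖
        ≤ ∑ k, ‖fderiv ℝ (pd i (pd j p)) x (Pi.single k 1)‖ := opnorm_le_sum _
      _ ≤ ∑ _k : Fin d, A3 := Finset.sum_le_sum fun k _ => by
          rw [Real.norm_eq_abs]; exact hA3 k i j x
      _ = (d : ℝ) * A3 := by
          rw [Finset.sum_const, Finset.card_univ, Fintype.card_fin, nsmul_eq_mul]
      _ ≤ Mb := by
          refine le_trans ?_ (hMbge ((d:ℝ)^2 * A3) (by simp))
          have h1d : (1:ℝ) ≤ (d:ℝ) := by exact_mod_cast hd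
          nlinarith [mul_nonneg (mul_nonneg hdn (sub_nonneg.mpr h1d)) hA3n]
  have hH1 : ∀ (i : Fin d) x, ‖fderiv ℝ (fderiv ℝ (pd i p)) x‖ ≤ Mb := by
    intro i x
    have hC2i : ContDiff ℝ 2 (pd i p) := (hC3 i).of_le (by norm_cast)
    calc ‖fderiv ℝ (fderiv ℝ (pd i p)) x‖
        ≤ ∑ k, ∑ j, |fderiv ℝ (fderiv ℝ (pd i p)) x (Pi.single k 1) (Pi.single j 1)| :=
          opnorm2_le_sum _
      _ ≤ ∑ _k : Fin d, ∑ _j : Fin d, A3 := by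
          refine Finset.sum_le_sum fun k _ => Finset.sum_le_sum fun j _ => ?_
          rw [← pd_pd_eq k j hC2i x]
          exact hA3 k j i x
      _ = (d : ℝ) ^ 2 * A3 := by
          simp [Finset.sum_const, Finset.card_univ]
          ring
      _ ≤ Mb := hMbge _ (by simp)
  have hH2 : ∀ (i j : Fin d) x, ‖fderiv ℝ (fderiv ℝ (pd i (pd j p))) x‖ ≤ Mb := by
    intro i j x
    calc ‖fderiv ℝ (fderiv ℝ (pd i (pd j p))) x‖
        ≤ ∑ k, ∑ l, |fderiv ℝ (fderiv ℝ (pd i (pd j p))) x (Pi.single k 1)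
            (Pi.single l 1)| := opnorm2_le_sum _
      _ ≤ ∑ _k : Fin d, ∑ _l : Fin d, A4 := by
          refine Finset.sum_le_sum fun k _ => Finset.sum_le_sum fun l _ => ?_
          rw [← pd_pd_eq k l (hC2' i j) x]
          exact hA4 k l i j x
      _ = (d : ℝ) ^ 2 * A4 := by
          simp [Finset.sum_const, Finset.card_univ]
          ring
      _ ≤ Mb := hMbge _ (by simp)
  -- Lipschitz bounds on first derivatives of pd's
  have hdiff1 : ∀ i : Fin d, Differentiable ℝ (fderiv ℝ (pd i p)) := by
    intro i
    have : ContDiff ℝ (1 : ℕ) (fderiv ℝ (pd i p)) :=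
      (hC3 i).fderiv_right (by norm_num)
    exact this.differentiable (by norm_num)
  have hdiff2 : ∀ i j : Fin d, Differentiable ℝ (fderiv ℝ (pd i (pd j p))) := by
    intro i j
    have : ContDiff ℝ (1 : ℕ) (fderiv ℝ (pd i (pd j p))) :=
      (hC2' i j).fderiv_right (by norm_num)
    exact this.differentiable (by norm_num)
  have hLip1 : ∀ (i : Fin d) a b,
      ‖fderiv ℝ (pd i p) a - fderiv ℝ (pd i p) b‖ ≤ Mb * ‖a - b‖ := fun i =>
    lip_of_fderiv_bound _ (hdiff1 i) Mb (hH1 i)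
  have hLip2 : ∀ (i j : Fin d) a b,
      ‖fderiv ℝ (pd i (pd j p)) a - fderiv ℝ (pd i (pd j p)) b‖ ≤ Mb * ‖a - b‖ :=
    fun i j => lip_of_fderiv_bound _ (hdiff2 i j) Mb (hH2 i j)
  -- p-level bounds
  have hMp : ∀ x, |p x| ≤ Mb := by
    intro x
    calc |p x| ≤ c0 := hc0 x
      _ ≤ |c0| := le_abs_self _
      _ ≤ Mb := hMbge _ (by simp)
  have hMp1 : ∀ (i : Fin d) x, |pd i p x| ≤ Mb := by
    intro i x
    exact (hA1 i x).trans (hMbge A1 (by simp))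
  have hMp2 : ∀ (i j : Fin d) x, |pd i (pd j p) x| ≤ Mb := by
    intro i j x
    exact (hA2 i j x).trans (hMbge A2 (by simp))
  -- the constant
  refine ⟨Real.sqrt d * (2 * Mb * K) + (d : ℝ) * (2 * Mb * K) + 1, ?_, ?_⟩
  · have h1 : 0 ≤ Real.sqrt d * (2 * Mb * K) :=
      mul_nonneg (Real.sqrt_nonneg _) (by positivity)
    have h2 : 0 ≤ (d : ℝ) * (2 * Mb * K) := mul_nonneg hdn (by positivity)
    linarith
  intro η hη y
  set ε : ℝ := Real.sqrt (2 * η) with hεdef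
  have hε2 : ε ^ 2 = 2 * η := Real.sq_sqrt (by linarith [hη.1])
  -- derivative of q
  have hq1 : ∀ (i : Fin d) (y' : Fin d → ℝ),
      pd i (fun y'' => ∫ z, p (y'' - ε • z) * φ z) y'
        = ∫ z, pd i p (y' - ε • z) * φ z := by
    intro i y'
    exact pd_conv p (hp4.of_le (by norm_cast)) Mb hMp hgradp φ hφ0 hφi ε i y'
  have hq2 : ∀ (i j : Fin d) (y' : Fin d → ℝ),
      pd j (pd i (fun y'' => ∫ z, p (y'' - ε • z) * φ z)) y'
        = ∫ z, pd j (pd i p) (y' - ε • z) * φ z := by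
    intro i j y'
    have hfun : pd i (fun y'' => ∫ z, p (y'' - ε • z) * φ z)
        = fun y'' => ∫ z, pd i p (y'' - ε • z) * φ z := funext (hq1 i)
    rw [hfun]
    exact pd_conv (pd i p) ((hC3 i).of_le (by norm_cast)) Mb (hMp1 i) (hgrad1 i)
      φ hφ0 hφi ε j y'
  -- coordinatewise bounds
  have hco1 : ∀ i : Fin d,
      |pd i (fun y'' => ∫ z, p (y'' - ε • z) * φ z) y - pd i p y|
        ≤ 2 * Mb * K * η := by
    intro i
    rw [hq1 i y]
    have := conv_sub_bound (pd i p) ((hC3 i).differentiable (by norm_num)) Mb Mb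
      hMb0 (hMp1 i) (hLip1 i) φ hφ0 hφi hφ1 hφsym hKint ε y
    rw [hε2, ← hKdef] at this
    calc |(∫ z, pd i p (y - ε • z) * φ z) - pd i p y| ≤ Mb * (2 * η) * K := this
      _ = 2 * Mb * K * η := by ring
  have hco2 : ∀ i : Fin d,
      |pd i (pd i (fun y'' => ∫ z, p (y'' - ε • z) * φ z)) y - pd i (pd i p) y|
        ≤ 2 * Mb * K * η := by
    intro i
    rw [hq2 i i y]
    have := conv_sub_bound (pd i (pd i p)) ((hC2' i i).differentiable (by norm_num))
      Mb Mb hMb0 (hMp2 i i) (hLip2 i i) φ hφ0 hφi hφ1 hφsym hKint ε y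
    rw [hε2, ← hKdef] at this
    calc |(∫ z, pd i (pd i p) (y - ε • z) * φ z) - pd i (pd i p) y|
        ≤ Mb * (2 * η) * K := this
      _ = 2 * Mb * K * η := by ring
  have hcn : 0 ≤ 2 * Mb * K * η := by
    have := hη.1; positivity
  constructor
  · -- gradient bound
    have hb : eunorm (grad (fun y'' => ∫ z, p (y'' - ε • z) * φ z) y - grad p y)
        ≤ Real.sqrt d * (2 * Mb * K * η) := by
      rw [eunorm]
      have hterm : ∀ i : Fin d,
          ((grad (fun y'' => ∫ z, p (y'' - ε • z) * φ z) y - grad p y) i) ^ 2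
            ≤ (2 * Mb * K * η) ^ 2 := by
        intro i
        have h := hco1 i
        have he : (grad (fun y'' => ∫ z, p (y'' - ε • z) * φ z) y - grad p y) i
            = pd i (fun y'' => ∫ z, p (y'' - ε • z) * φ z) y - pd i p y := rfl
        rw [he, ← sq_abs]
        exact pow_le_pow_left₀ (abs_nonneg _) h 2
      calc Real.sqrt (∑ i, ((grad (fun y'' => ∫ z, p (y'' - ε • z) * φ z) y
              - grad p y) i) ^ 2)
          ≤ Real.sqrt (∑ _i : Fin d, (2 * Mb * K * η) ^ 2) :=
            Real.sqrt_le_sqrt (Finset.sum_le_sum fun i _ => hterm i)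
        _ = Real.sqrt ((d : ℝ) * (2 * Mb * K * η) ^ 2) := by
            rw [Finset.sum_const, Finset.card_univ, Fintype.card_fin, nsmul_eq_mul]
        _ = Real.sqrt d * (2 * Mb * K * η) := by
            rw [Real.sqrt_mul hdn, Real.sqrt_sq hcn]
      
    refine hb.trans ?_
    have h2 : 0 ≤ (d : ℝ) * (2 * Mb * K) := mul_nonneg hdn (by positivity)
    have hη0 : 0 ≤ η := le_of_lt hη.1
    calc Real.sqrt d * (2 * Mb * K * η) = (Real.sqrt d * (2 * Mb * K)) * η := by ring
      _ ≤ (Real.sqrt d * (2 * Mb * K) + (d : ℝ) * (2 * Mb * K) + 1) * η := by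
          apply mul_le_mul_of_nonneg_right _ hη0
          linarith
  · -- laplacian bound
    have hsum : lap (fun y'' => ∫ z, p (y'' - ε • z) * φ z) y - lap p y
        = ∑ i, (pd i (pd i (fun y'' => ∫ z, p (y'' - ε • z) * φ z)) y
            - pd i (pd i p) y) := by
      rw [lap, lap, Finset.sum_sub_distrib]
    rw [hsum]
    have h1 : |∑ i, (pd i (pd i (fun y'' => ∫ z, p (y'' - ε • z) * φ z)) y
        - pd i (pd i p) y)| ≤ (d : ℝ) * (2 * Mb * K * η) := by
      calc |∑ i, (pd i (pd i (fun y'' => ∫ z, p (y'' - ε • z) * φ z)) y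
            - pd i (pd i p) y)|
          ≤ ∑ i, |pd i (pd i (fun y'' => ∫ z, p (y'' - ε • z) * φ z)) y
            - pd i (pd i p) y| := Finset.abs_sum_le_sum_abs _ _
        _ ≤ ∑ _i : Fin d, 2 * Mb * K * η := Finset.sum_le_sum fun i _ => hco2 i
        _ = (d : ℝ) * (2 * Mb * K * η) := by
            rw [Finset.sum_const, Finset.card_univ, Fintype.card_fin, nsmul_eq_mul]
    refine h1.trans ?_
    have h2 : 0 ≤ Real.sqrt d * (2 * Mb * K) :=
      mul_nonneg (Real.sqrt_nonneg _) (by positivity)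
    have hη0 : 0 ≤ η := le_of_lt hη.1
    calc (d : ℝ) * (2 * Mb * K * η) = ((d : ℝ) * (2 * Mb * K)) * η := by ring
      _ ≤ (Real.sqrt d * (2 * Mb * K) + (d : ℝ) * (2 * Mb * K) + 1) * η := by
          apply mul_le_mul_of_nonneg_right _ hη0
          linarith
end
end

section
/- Higher-order expansion of the derivatives of the noisy density: Assume p satisfies the smoothness assumption S(6), and Z has a density φ, is symmetric about 0, and satisfies the moment assumptions N(i) and N(ii). For η ∈ (0,1) let q_η(y) = ∫_{ℝ^d} p(y − √(2η)·z) φ(z) dz. Then there exists a constant C > 0 such that for all η ∈ (0,1): sup_{y∈ℝ^d} ‖∇q_η(y) − ∇p(y) − η·∇Δp(y)‖ ≤ C·η², sup_{y∈ℝ^d} |Δq_η(y) − Δp(y) − η·Δ²p(y)| ≤ C·η², and sup_{y∈ℝ^d} ‖∇Δq_η(y) − ∇Δp(y)‖ ≤ C·η. -/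
open MeasureTheory Real

noncomputable section

set_option synthInstance.maxHeartbeats 1000000
set_option maxHeartbeats 4000000

lemma taylor_four (f0 f1 f2 f3 f4 : ℝ → ℝ)
    (h0 : ∀ t, HasDerivAt f0 (f1 t) t) (h1 : ∀ t, HasDerivAt f1 (f2 t) t)
    (h2 : ∀ t, HasDerivAt f2 (f3 t) t) (h3 : ∀ t, HasDerivAt f3 (f4 t) t)
    (hc : Continuous f4) {K : ℝ} (hK : ∀ t ∈ Set.Icc (0:ℝ) 1, |f4 t| ≤ K) :
    |f0 1 - f0 0 - f1 0 - f2 0 / 2 - f3 0 / 6| ≤ K := by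
  have hK0 : 0 ≤ K := (abs_nonneg _).trans (hK 0 (by norm_num))
  set H : ℝ → ℝ := fun t =>
    f0 t + (1-t) * f1 t + (1-t)^2/2 * f2 t + (1-t)^3/6 * f3 t with hHdef
  have hH' : ∀ t, HasDerivAt H ((1-t)^3/6 * f4 t) t := by
    intro t
    have p1 : HasDerivAt (fun s : ℝ => (1-s)) (-1) t := by
      simpa using (hasDerivAt_id t).const_sub 1
    have p2 : HasDerivAt (fun s : ℝ => (1-s)^2/2) ((2:ℕ) * (1-t)^1 * (-1) / 2) t :=
      (p1.pow 2).div_const 2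
    have p3 : HasDerivAt (fun s : ℝ => (1-s)^3/6) ((3:ℕ) * (1-t)^2 * (-1) / 6) t :=
      (p1.pow 3).div_const 6
    have A := (((h0 t).add (p1.mul (h1 t))).add (p2.mul (h2 t))).add (p3.mul (h3 t))
    convert A using 1
    · rfl
    · rfl
    · rfl
    push_cast
    ring
  have hint : IntervalIntegrable (fun t : ℝ => (1-t)^3/6 * f4 t) volume 0 1 :=
    (Continuous.mul (by continuity) hc).intervalIntegrable 0 1
  have key : ∫ t in (0:ℝ)..1, (1-t)^3/6 * f4 t = H 1 - H 0 :=
    intervalIntegral.integral_eq_sub_of_hasDerivAt (fun t _ => hH' t) hint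
  have hH1 : H 1 = f0 1 := by simp [hHdef]
  have hH0 : H 0 = f0 0 + f1 0 + f2 0 / 2 + f3 0 / 6 := by norm_num [hHdef]; ring
  have hbound : |∫ t in (0:ℝ)..1, (1-t)^3/6 * f4 t| ≤ K := by
    have := intervalIntegral.norm_integral_le_of_norm_le_const
      (C := K) (f := fun t : ℝ => (1-t)^3/6 * f4 t) (a := 0) (b := 1) ?_
    · simpa using this
    · intro x hx
      rw [Set.uIoc_of_le (by norm_num : (0:ℝ) ≤ 1)] at hx
      have hx1 : 0 ≤ 1 - x := by linarith [hx.2]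
      have hx2 : 1 - x ≤ 1 := by linarith [hx.1.le]
      have h4 : |f4 x| ≤ K := hK x ⟨hx.1.le, hx.2⟩
      have : |(1-x)^3/6| ≤ 1 := by
        rw [abs_div, abs_of_nonneg (pow_nonneg hx1 3)]
        rw [abs_of_nonneg (by norm_num : (0:ℝ) ≤ 6)]
        have : (1-x)^3 ≤ 1 := pow_le_one₀ hx1 hx2
        nlinarith [pow_nonneg hx1 3]
      calc ‖(1-x)^3/6 * f4 x‖ = |(1-x)^3/6| * |f4 x| := abs_mul _ _
        _ ≤ 1 * K := mul_le_mul this h4 (abs_nonneg _) zero_le_one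
        _ = K := one_mul K
  rw [key, hH1, hH0] at hbound
  convert hbound using 2
  ring

lemma taylor_two (f0 f1 f2 : ℝ → ℝ)
    (h0 : ∀ t, HasDerivAt f0 (f1 t) t) (h1 : ∀ t, HasDerivAt f1 (f2 t) t)
    (hc : Continuous f2) {K : ℝ} (hK : ∀ t ∈ Set.Icc (0:ℝ) 1, |f2 t| ≤ K) :
    |f0 1 - f0 0 - f1 0| ≤ K := by
  have hK0 : 0 ≤ K := (abs_nonneg _).trans (hK 0 (by norm_num))
  set H : ℝ → ℝ := fun t => f0 t + (1-t) * f1 t with hHdef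
  have hH' : ∀ t, HasDerivAt H ((1-t) * f2 t) t := by
    intro t
    have p1 : HasDerivAt (fun s : ℝ => (1-s)) (-1) t := by
      simpa using (hasDerivAt_id t).const_sub 1
    have A := (h0 t).add (p1.mul (h1 t))
    convert A using 1
    · rfl
    · rfl
    · rfl
    ring
  have hint : IntervalIntegrable (fun t : ℝ => (1-t) * f2 t) volume 0 1 :=
    (Continuous.mul (by continuity) hc).intervalIntegrable 0 1
  have key : ∫ t in (0:ℝ)..1, (1-t) * f2 t = H 1 - H 0 :=
    intervalIntegral.integral_eq_sub_of_hasDerivAt (fun t _ => hH' t) hint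
  have hH1 : H 1 = f0 1 := by simp [hHdef]
  have hH0 : H 0 = f0 0 + f1 0 := by norm_num [hHdef]
  have hbound : |∫ t in (0:ℝ)..1, (1-t) * f2 t| ≤ K := by
    have := intervalIntegral.norm_integral_le_of_norm_le_const
      (C := K) (f := fun t : ℝ => (1-t) * f2 t) (a := 0) (b := 1) ?_
    · simpa using this
    · intro x hx
      rw [Set.uIoc_of_le (by norm_num : (0:ℝ) ≤ 1)] at hx
      have hx1 : 0 ≤ 1 - x := by linarith [hx.2]
      have hx2 : 1 - x ≤ 1 := by linarith [hx.1.le]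
      have h4 : |f2 x| ≤ K := hK x ⟨hx.1.le, hx.2⟩
      calc ‖(1-x) * f2 x‖ = |1-x| * |f2 x| := abs_mul _ _
        _ ≤ 1 * K := mul_le_mul (by rw [abs_of_nonneg hx1]; exact hx2) h4 (abs_nonneg _) zero_le_one
        _ = K := one_mul K
  rw [key, hH1, hH0] at hbound
  convert hbound using 2
  ring
lemma pd_contDiff {d n : ℕ} {g : (Fin d → ℝ) → ℝ} (hg : ContDiff ℝ (n+1 : ℕ) g) (i : Fin d) :
    ContDiff ℝ (n : ℕ) (pd i g) := by
  have h1 : ContDiff ℝ (n : ℕ) (fderiv ℝ g) := hg.fderiv_right (by exact_mod_cast le_refl (n+1 : ℕ))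
  exact h1.clm_apply contDiff_const

lemma pdl_append {d : ℕ} (l : List (Fin d)) (i : Fin d) (g : (Fin d → ℝ) → ℝ) :
    pdl (l ++ [i]) g = pdl l (pd i g) := by
  simp [pdl, List.foldr_append]

def itd {d : ℕ} (v : Fin d → ℝ) : ℕ → ((Fin d → ℝ) → ℝ) → (Fin d → ℝ) → ℝ
  | 0, g => g
  | n+1, g => fun x => ∑ i, v i * itd v n (pd i g) x

lemma fderiv_apply_eq_sum' {d : ℕ} (L : (Fin d → ℝ) →L[ℝ] ℝ) (v : Fin d → ℝ) :
    L v = ∑ i, v i * L (Pi.single i 1) := by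
  have hv : v = ∑ i, v i • (Pi.single i (1:ℝ) : Fin d → ℝ) := by
    funext j
    simp [Finset.sum_apply, Pi.single_apply]
  conv_lhs => rw [hv]
  rw [map_sum]
  simp [smul_eq_mul]

lemma hasDerivAt_line {d : ℕ} {g : (Fin d → ℝ) → ℝ} {y v : Fin d → ℝ} {t : ℝ}
    (hg : DifferentiableAt ℝ g (y + t • v)) :
    HasDerivAt (fun s : ℝ => g (y + s • v)) (∑ i, v i * pd i g (y + t • v)) t := by
  have hpath : HasDerivAt (fun s : ℝ => y + s • v) v t := by
    simpa using ((hasDerivAt_id t).smul_const v).const_add y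
  have h := hg.hasFDerivAt.comp_hasDerivAt t hpath
  simpa [Function.comp_def, fderiv_apply_eq_sum' (fderiv ℝ g (y + t • v)) v, pd] using h

lemma itd_hasDerivAt {d : ℕ} (v : Fin d → ℝ) : ∀ (n : ℕ) (g : (Fin d → ℝ) → ℝ),
    ContDiff ℝ (n+1 : ℕ) g → ∀ (y : Fin d → ℝ) (t : ℝ),
    HasDerivAt (fun s : ℝ => itd v n g (y + s • v)) (itd v (n+1) g (y + t • v)) t := by
  intro n
  induction n with
  | zero =>
    intro g hg y t
    have := hasDerivAt_line (g := g) (y := y) (v := v) (t := t)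
      ((hg.differentiable (by norm_num)) _)
    simpa [itd] using this
  | succ n ih =>
    intro g hg y t
    have key : ∀ i : Fin d, HasDerivAt (fun s : ℝ => v i * itd v n (pd i g) (y + s • v))
        (v i * itd v (n+1) (pd i g) (y + t • v)) t := by
      intro i
      exact (ih (pd i g) (pd_contDiff hg i) y t).const_mul (v i)
    have hsum := HasDerivAt.fun_sum (u := Finset.univ) (fun i _ => key i)
    simpa [itd] using hsum

lemma itd_bound {d : ℕ} (v : Fin d → ℝ) : ∀ (n : ℕ) (g : (Fin d → ℝ) → ℝ) (M : ℝ), 0 ≤ M →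
    (∀ l : List (Fin d), l.length ≤ n → ∀ x, |pdl l g x| ≤ M) →
    ∀ x, |itd v n g x| ≤ (∑ i, |v i|)^n * M := by
  intro n
  induction n with
  | zero =>
    intro g M hM0 hb x
    simpa [itd, pdl] using hb [] (by simp) x
  | succ n ih =>
    intro g M hM0 hb x
    have hW : 0 ≤ ∑ i, |v i| := Finset.sum_nonneg fun i _ => abs_nonneg _
    calc |itd v (n+1) g x| = |∑ i, v i * itd v n (pd i g) x| := by simp [itd]
      _ ≤ ∑ i, |v i * itd v n (pd i g) x| := Finset.abs_sum_le_sum_abs _ _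
      _ ≤ ∑ i, |v i| * ((∑ j, |v j|)^n * M) := by
          apply Finset.sum_le_sum
          intro i _
          rw [abs_mul]
          refine mul_le_mul_of_nonneg_left ?_ (abs_nonneg _)
          apply ih (pd i g) M hM0
          intro l hl x'
          rw [← pdl_append]
          exact hb (l ++ [i]) (by simpa using hl) x'
      _ = (∑ i, |v i|)^(n+1) * M := by rw [← Finset.sum_mul]; ring
    
lemma itd_neg {d : ℕ} (v : Fin d → ℝ) : ∀ (n : ℕ) (g : (Fin d → ℝ) → ℝ) (x : Fin d → ℝ),
    itd (-v) n g x = (-1)^n * itd v n g x := by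
  intro n
  induction n with
  | zero => intro g x; simp [itd]
  | succ n ih =>
    intro g x
    simp only [itd]
    rw [Finset.mul_sum]
    apply Finset.sum_congr rfl
    intro i _
    rw [ih (pd i g) x]
    simp
    ring

lemma itd_continuous {d : ℕ} (v : Fin d → ℝ) : ∀ (n : ℕ) (g : (Fin d → ℝ) → ℝ),
    ContDiff ℝ (n : ℕ) g → Continuous (itd v n g) := by
  intro n
  induction n with
  | zero => intro g hg; simpa [itd] using hg.continuous
  | succ n ih =>
    intro g hg
    simp only [itd]
    apply continuous_finset_sum
    intro i _
    exact continuous_const.mul (ih (pd i g) (pd_contDiff hg i))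
lemma fderiv_apply_eq_sum2 {d : ℕ} (L : (Fin d → ℝ) →L[ℝ] ℝ) (v : Fin d → ℝ) :
    L v = ∑ i, v i * L (Pi.single i 1) := fderiv_apply_eq_sum' L v

lemma opNorm_le_sum_pd {d : ℕ} {g : (Fin d → ℝ) → ℝ} {x : Fin d → ℝ} {M1 : ℝ} (hM1 : 0 ≤ M1)
    (hb : ∀ i, |pd i g x| ≤ M1) : ‖fderiv ℝ g x‖ ≤ d * M1 := by
  apply ContinuousLinearMap.opNorm_le_bound _ (by positivity)
  intro v
  rw [fderiv_apply_eq_sum2]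
  calc |∑ i, v i * (fderiv ℝ g x) (Pi.single i 1)|
      ≤ ∑ i, |v i * (fderiv ℝ g x) (Pi.single i 1)| := Finset.abs_sum_le_sum_abs _ _
    _ ≤ ∑ _i : Fin d, ‖v‖ * M1 := by
        apply Finset.sum_le_sum
        intro i _
        rw [abs_mul]
        exact mul_le_mul (norm_le_pi_norm v i) (hb i) (abs_nonneg _) (norm_nonneg _)
    _ = d * M1 * ‖v‖ := by simp [Finset.sum_const]; ring

lemma pd_integral {d : ℕ} (g φ : (Fin d → ℝ) → ℝ) (hφ : Integrable φ) (hφ0 : ∀ z, 0 ≤ φ z)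
    (hg : ContDiff ℝ 1 g) {M0 M1 : ℝ} (hM1pos : 0 ≤ M1)
    (hM0 : ∀ x, |g x| ≤ M0) (hM1 : ∀ x i, |pd i g x| ≤ M1)
    (c : ℝ) (i : Fin d) (y : Fin d → ℝ) :
    pd i (fun y' => ∫ z, g (y' - c • z) * φ z) y = ∫ z, pd i g (y - c • z) * φ z := by
  have hgd : Differentiable ℝ g := hg.differentiable (by norm_num)
  have hgc : Continuous g := hg.continuous
  have hfc : Continuous (fderiv ℝ g) := hg.continuous_fderiv (by norm_num)
  have hmap : ∀ x : Fin d → ℝ, Continuous fun z : Fin d → ℝ => x - c • z := by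
    intro x; continuity
  have haesm : ∀ x : Fin d → ℝ, AEStronglyMeasurable (fun z => g (x - c • z) * φ z) volume :=
    fun x => ((hgc.comp (hmap x)).aestronglyMeasurable).mul hφ.1
  have haesm' : AEStronglyMeasurable (fun z => φ z • fderiv ℝ g (y - c • z)) volume :=
    hφ.1.smul ((hfc.comp (hmap y)).aestronglyMeasurable)
  have hbound_int : Integrable (fun z => (d * M1) * φ z) volume := hφ.const_mul _
  have key := hasFDerivAt_integral_of_dominated_of_fderiv_le (μ := volume)
      (F := fun x z => g (x - c • z) * φ z)
      (F' := fun x z => φ z • fderiv ℝ g (x - c • z))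
      (x₀ := y) (bound := fun z => (d * M1) * φ z) (s := Metric.ball y 1) (Metric.ball_mem_nhds y zero_lt_one)
      (Filter.Eventually.of_forall fun x => haesm x)
      (Integrable.mono' (hφ.const_mul M0) (haesm y) ?_)
      haesm' ?_ hbound_int ?_
  · have hInt' : Integrable (fun z => φ z • fderiv ℝ g (y - c • z)) volume := by
      apply Integrable.mono' hbound_int haesm'
      filter_upwards with z
      rw [norm_smul]
      calc ‖φ z‖ * ‖fderiv ℝ g (y - c • z)‖ ≤ φ z * (d * M1) := by
            rw [Real.norm_eq_abs, abs_of_nonneg (hφ0 z)]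
            exact mul_le_mul_of_nonneg_left (opNorm_le_sum_pd hM1pos (fun j => hM1 _ j)) (hφ0 z)
        _ = (d * M1) * φ z := mul_comm _ _
    have : pd i (fun y' => ∫ z, g (y' - c • z) * φ z) y
        = (∫ z, φ z • fderiv ℝ g (y - c • z)) (Pi.single i 1) := by
      rw [pd, key.fderiv]
    rw [this, ContinuousLinearMap.integral_apply hInt']
    congr 1
    funext z
    simp [pd, smul_eq_mul, mul_comm]
  · filter_upwards with z
    rw [norm_mul, Real.norm_eq_abs, Real.norm_eq_abs, abs_of_nonneg (hφ0 z)]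
    exact mul_le_mul_of_nonneg_right (hM0 _) (hφ0 z)
  · filter_upwards with z
    intro x _
    rw [show ‖φ z • fderiv ℝ g (x - c • z)‖ = ‖φ z‖ * ‖fderiv ℝ g (x - c • z)‖ from norm_smul _ _,
      Real.norm_eq_abs, abs_of_nonneg (hφ0 z)]
    calc φ z * ‖fderiv ℝ g (x - c • z)‖ ≤ φ z * (d * M1) :=
          mul_le_mul_of_nonneg_left (opNorm_le_sum_pd hM1pos (fun j => hM1 _ j)) (hφ0 z)
      _ = (d * M1) * φ z := mul_comm _ _
  · filter_upwards with z
    intro x _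
    have h1 : HasFDerivAt (fun x' : Fin d → ℝ => x' - c • z)
        (ContinuousLinearMap.id ℝ (Fin d → ℝ)) x := (hasFDerivAt_id x).sub_const _
    have h2 := ((hgd (x - c • z)).hasFDerivAt.comp x h1)
    have h3 := h2.mul_const (φ z)
    simpa using h3

lemma lemB {d : ℕ} (g φ : (Fin d → ℝ) → ℝ)
    (hg : ContDiff ℝ (4:ℕ) g) {M : ℝ} (hM0 : 0 ≤ M)
    (hMb : ∀ l : List (Fin d), l.length ≤ 4 → ∀ x, |pdl l g x| ≤ M)
    (hφ : Integrable φ) (hφ0 : ∀ z, 0 ≤ φ z) (hφ1 : (∫ z, φ z) = 1)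
    (hφsym : ∀ z, φ (-z) = φ z)
    (hmom2 : ∀ i j, (∫ z, z i * z j * φ z) = if i = j then (1:ℝ) else 0)
    (hzz : ∀ i j : Fin d, Integrable (fun z : Fin d → ℝ => z i * z j * φ z))
    (hW4 : Integrable (fun z : Fin d → ℝ => (∑ i, |z i|)^4 * φ z))
    {η : ℝ} (hη : 0 < η) (y : Fin d → ℝ) :
    |(∫ z, g (y - Real.sqrt (2*η) • z) * φ z) - g y - η * lap g y|
      ≤ (4 * M * (∫ z, (∑ i, |z i|)^4 * φ z)) * η^2 := by
  set c := Real.sqrt (2*η) with hcdef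
  have hc0 : 0 ≤ c := Real.sqrt_nonneg _
  have hc2 : c^2 = 2*η := Real.sq_sqrt (by positivity)
  have hgcont : Continuous g := hg.continuous
  have hgbd : ∀ x, |g x| ≤ M := hMb [] (by simp)
  -- pointwise Taylor estimate
  have hptw : ∀ z : Fin d → ℝ,
      |g (y + c • z) + g (y - c • z) - 2 * g y - itd (c • z) 2 g y|
        ≤ 8 * η^2 * M * (∑ i, |z i|)^4 := by
    intro z
    set v : Fin d → ℝ := c • z with hvdef
    have hW : (∑ i, |v i|) = c * ∑ i, |z i| := by
      rw [Finset.mul_sum]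
      apply Finset.sum_congr rfl
      intro i _
      rw [hvdef, Pi.smul_apply, smul_eq_mul, abs_mul, abs_of_nonneg hc0]
    have hWn : (∑ i, |(-v) i|) = ∑ i, |v i| := by
      apply Finset.sum_congr rfl
      intro i _
      simp
    have hcd : ∀ k : ℕ, k + 1 ≤ 4 → ContDiff ℝ ((k:ℕ)+1 : ℕ) g := by
      intro k hk
      exact hg.of_le (by exact_mod_cast hk)
    have hder : ∀ k : ℕ, k + 1 ≤ 4 → ∀ t : ℝ,
        HasDerivAt (fun s : ℝ => itd v k g (y + s • v) + itd (-v) k g (y + s • (-v)))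
          (itd v (k+1) g (y + t • v) + itd (-v) (k+1) g (y + t • (-v))) t := by
      intro k hk t
      exact (itd_hasDerivAt v k g (hcd k hk) y t).add (itd_hasDerivAt (-v) k g (hcd k hk) y t)
    have hcontline : Continuous (fun s : ℝ => y + s • v) := by continuity
    have hcontline' : Continuous (fun s : ℝ => y + s • (-v)) := by continuity
    have hf4cont : Continuous (fun t : ℝ =>
        itd v 4 g (y + t • v) + itd (-v) 4 g (y + t • (-v))) :=
      ((itd_continuous v 4 g hg).comp hcontline).add
        ((itd_continuous (-v) 4 g hg).comp hcontline')
    have hf4bd : ∀ t ∈ Set.Icc (0:ℝ) 1,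
        |itd v 4 g (y + t • v) + itd (-v) 4 g (y + t • (-v))|
          ≤ 2 * ((∑ i, |v i|)^4 * M) := by
      intro t _
      have hb1 := itd_bound v 4 g M hM0 hMb (y + t • v)
      have hb2 := itd_bound (-v) 4 g M hM0 hMb (y + t • (-v))
      rw [hWn] at hb2
      calc |itd v 4 g (y + t • v) + itd (-v) 4 g (y + t • (-v))|
          ≤ |itd v 4 g (y + t • v)| + |itd (-v) 4 g (y + t • (-v))| := abs_add_le _ _
        _ ≤ 2 * ((∑ i, |v i|)^4 * M) := by linarith
    have htay := taylor_four
      (fun t : ℝ => itd v 0 g (y + t • v) + itd (-v) 0 g (y + t • (-v)))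
      (fun t : ℝ => itd v 1 g (y + t • v) + itd (-v) 1 g (y + t • (-v)))
      (fun t : ℝ => itd v 2 g (y + t • v) + itd (-v) 2 g (y + t • (-v)))
      (fun t : ℝ => itd v 3 g (y + t • v) + itd (-v) 3 g (y + t • (-v)))
      (fun t : ℝ => itd v 4 g (y + t • v) + itd (-v) 4 g (y + t • (-v)))
      (fun t => hder 0 (by norm_num) t) (fun t => hder 1 (by norm_num) t)
      (fun t => hder 2 (by norm_num) t) (fun t => hder 3 (by norm_num) t)
      hf4cont hf4bd
    simp only [one_smul, zero_smul, add_zero] at htay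
    have h00 : ∀ (u w : Fin d → ℝ), itd u 0 g w = g w := fun _ _ => rfl
    rw [h00, h00, h00, h00, itd_neg v 1 g y, itd_neg v 2 g y, itd_neg v 3 g y] at htay
    have hW4v : (∑ i, |v i|)^4 = 4 * η^2 * (∑ i, |z i|)^4 := by
      rw [hW, mul_pow]
      have : c^4 = (c^2)^2 := by ring
      rw [this, hc2]
      ring
    rw [hW4v] at htay
    have heq : g (y + c • z) + g (y - c • z) - 2 * g y - itd (c • z) 2 g y
        = g (y + v) + g (y + -v) - (g y + g y) - (itd v 1 g y + (-1)^1 * itd v 1 g y)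
          - (itd v 2 g y + (-1)^2 * itd v 2 g y) / 2
          - (itd v 3 g y + (-1)^3 * itd v 3 g y) / 6 := by
      rw [hvdef, sub_eq_add_neg y (c • z)]
      ring
    rw [heq]
    calc _ ≤ 2 * (4 * η^2 * (∑ i, |z i|)^4 * M) := htay
      _ = 8 * η^2 * M * (∑ i, |z i|)^4 := by ring
  -- integrability of the pieces
  have hmapc : ∀ (w : Fin d → ℝ) (s : ℝ), Continuous fun z : Fin d → ℝ => w + s • (c • z) := by
    intro w s; continuity
  have hA : Integrable (fun z => g (y + c • z) * φ z) := by
    apply Integrable.mono' (hφ.const_mul M)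
    · exact ((hgcont.comp (by continuity)).aestronglyMeasurable).mul hφ.1
    · filter_upwards with z
      rw [norm_mul, Real.norm_eq_abs, Real.norm_eq_abs, abs_of_nonneg (hφ0 z)]
      exact mul_le_mul_of_nonneg_right (hgbd _) (hφ0 z)
  have hB : Integrable (fun z => g (y - c • z) * φ z) := by
    apply Integrable.mono' (hφ.const_mul M)
    · exact ((hgcont.comp (by continuity)).aestronglyMeasurable).mul hφ.1
    · filter_upwards with z
      rw [norm_mul, Real.norm_eq_abs, Real.norm_eq_abs, abs_of_nonneg (hφ0 z)]
      exact mul_le_mul_of_nonneg_right (hgbd _) (hφ0 z)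
  have hAB : (∫ z, g (y + c • z) * φ z) = ∫ z, g (y - c • z) * φ z := by
    rw [← integral_neg_eq_self (fun z => g (y + c • z) * φ z) volume]
    congr 1
    funext z
    rw [hφsym]
    congr 2
    rw [smul_neg]
    abel
  have hI2fun : (fun z : Fin d → ℝ => itd (c • z) 2 g y * φ z)
      = (fun z => ∑ i, ∑ j, (c^2 * pd j (pd i g) y) * (z i * z j * φ z)) := by
    funext z
    simp only [itd, Pi.smul_apply, smul_eq_mul, Finset.sum_mul, Finset.mul_sum]
    apply Finset.sum_congr rfl
    intro i _
    apply Finset.sum_congr rfl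
    intro j _
    ring
  have hI2int : Integrable (fun z : Fin d → ℝ => itd (c • z) 2 g y * φ z) := by
    rw [hI2fun]
    apply integrable_finset_sum
    intro i _
    apply integrable_finset_sum
    intro j _
    exact (hzz i j).const_mul _
  have hI2val : (∫ z, itd (c • z) 2 g y * φ z) = 2 * η * lap g y := by
    rw [hI2fun]
    rw [integral_finset_sum _ (fun i _ => integrable_finset_sum _ (fun j _ => (hzz i j).const_mul _))]
    have : ∀ i : Fin d, (∫ z : Fin d → ℝ, ∑ j, (c^2 * pd j (pd i g) y) * (z i * z j * φ z))
        = c^2 * pd i (pd i g) y := by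
      intro i
      rw [integral_finset_sum _ (fun j _ => (hzz i j).const_mul _)]
      have : ∀ j : Fin d, (∫ z : Fin d → ℝ, (c^2 * pd j (pd i g) y) * (z i * z j * φ z))
          = (c^2 * pd j (pd i g) y) * (if i = j then (1:ℝ) else 0) := by
        intro j
        rw [integral_const_mul, hmom2 i j]
      rw [Finset.sum_congr rfl (fun j _ => this j)]
      simp [Finset.sum_ite_eq]
    rw [Finset.sum_congr rfl (fun i _ => this i), ← Finset.mul_sum, hc2, lap]
  -- remainder integral
  set R : (Fin d → ℝ) → ℝ :=
    fun z => g (y + c • z) + g (y - c • z) - 2 * g y - itd (c • z) 2 g y with hRdef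
  have hRfun : (fun z => R z * φ z) = fun z =>
      (g (y + c • z) * φ z + g (y - c • z) * φ z)
        - ((2 * g y) * φ z + itd (c • z) 2 g y * φ z) := by
    funext z
    rw [hRdef]
    ring
  have hRint : Integrable (fun z => R z * φ z) := by
    rw [hRfun]
    exact (hA.add hB).sub ((hφ.const_mul _).add hI2int)
  have hRval : (∫ z, R z * φ z)
      = 2 * (∫ z, g (y - c • z) * φ z) - 2 * g y - 2 * η * lap g y := by
    have hS1 : Integrable (fun z => g (y + c • z) * φ z + g (y - c • z) * φ z) := hA.add hB
    have hS2 : Integrable (fun z => (2 * g y) * φ z + itd (c • z) 2 g y * φ z) :=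
      (hφ.const_mul (2 * g y)).add hI2int
    rw [hRfun, integral_sub hS1 hS2, integral_add hA hB,
      integral_add (hφ.const_mul (2 * g y)) hI2int,
      integral_const_mul, hφ1, hAB, hI2val]
    ring
  have hRbd : |∫ z, R z * φ z| ≤ (8 * η^2 * M) * ∫ z, (∑ i, |z i|)^4 * φ z := by
    have h0 : |∫ z, R z * φ z| ≤ ∫ z, |R z| * |φ z| := by
      have h00 := norm_integral_le_integral_norm (μ := volume) (fun z => R z * φ z)
      simp only [Real.norm_eq_abs, abs_mul] at h00
      exact h00
    have habs : Integrable (fun z => |R z| * |φ z|) := by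
      simpa [abs_mul] using hRint.abs
    have h1 : (∫ z, |R z| * |φ z|) ≤ ∫ z, (8 * η^2 * M) * ((∑ i, |z i|)^4 * φ z) := by
      apply integral_mono habs (hW4.const_mul _)
      intro z
      show |R z| * |φ z| ≤ (8 * η^2 * M) * ((∑ i, |z i|)^4 * φ z)
      rw [abs_of_nonneg (hφ0 z)]
      have h2 := mul_le_mul_of_nonneg_right (hptw z) (hφ0 z)
      calc |R z| * φ z ≤ 8 * η^2 * M * (∑ i, |z i|)^4 * φ z := h2
        _ = (8 * η^2 * M) * ((∑ i, |z i|)^4 * φ z) := by ring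
    rw [integral_const_mul] at h1
    exact h0.trans h1
  rw [hRval] at hRbd
  rw [abs_le] at hRbd ⊢
  constructor <;> [skip; skip] <;> nlinarith [hRbd.1, hRbd.2]

lemma lemB2 {d : ℕ} (g φ : (Fin d → ℝ) → ℝ)
    (hg : ContDiff ℝ (2:ℕ) g) {M : ℝ} (hM0 : 0 ≤ M)
    (hMb : ∀ l : List (Fin d), l.length ≤ 2 → ∀ x, |pdl l g x| ≤ M)
    (hφ : Integrable φ) (hφ0 : ∀ z, 0 ≤ φ z) (hφ1 : (∫ z, φ z) = 1)
    (hφsym : ∀ z, φ (-z) = φ z)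
    (hW2 : Integrable (fun z : Fin d → ℝ => (∑ i, |z i|)^2 * φ z))
    {η : ℝ} (hη : 0 < η) (y : Fin d → ℝ) :
    |(∫ z, g (y - Real.sqrt (2*η) • z) * φ z) - g y|
      ≤ (2 * M * (∫ z, (∑ i, |z i|)^2 * φ z)) * η := by
  set c := Real.sqrt (2*η) with hcdef
  have hc0 : 0 ≤ c := Real.sqrt_nonneg _
  have hc2 : c^2 = 2*η := Real.sq_sqrt (by positivity)
  have hgcont : Continuous g := hg.continuous
  have hgbd : ∀ x, |g x| ≤ M := hMb [] (by simp)
  have hptw : ∀ z : Fin d → ℝ,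
      |g (y + c • z) + g (y - c • z) - 2 * g y|
        ≤ 4 * η * M * (∑ i, |z i|)^2 := by
    intro z
    set v : Fin d → ℝ := c • z with hvdef
    have hW : (∑ i, |v i|) = c * ∑ i, |z i| := by
      rw [Finset.mul_sum]
      apply Finset.sum_congr rfl
      intro i _
      rw [hvdef, Pi.smul_apply, smul_eq_mul, abs_mul, abs_of_nonneg hc0]
    have hWn : (∑ i, |(-v) i|) = ∑ i, |v i| := by
      apply Finset.sum_congr rfl
      intro i _
      simp
    have hcd : ∀ k : ℕ, k + 1 ≤ 2 → ContDiff ℝ ((k:ℕ)+1 : ℕ) g := by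
      intro k hk
      exact hg.of_le (by exact_mod_cast hk)
    have hder : ∀ k : ℕ, k + 1 ≤ 2 → ∀ t : ℝ,
        HasDerivAt (fun s : ℝ => itd v k g (y + s • v) + itd (-v) k g (y + s • (-v)))
          (itd v (k+1) g (y + t • v) + itd (-v) (k+1) g (y + t • (-v))) t := by
      intro k hk t
      exact (itd_hasDerivAt v k g (hcd k hk) y t).add (itd_hasDerivAt (-v) k g (hcd k hk) y t)
    have hcontline : Continuous (fun s : ℝ => y + s • v) := by continuity
    have hcontline' : Continuous (fun s : ℝ => y + s • (-v)) := by continuity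
    have hf2cont : Continuous (fun t : ℝ =>
        itd v 2 g (y + t • v) + itd (-v) 2 g (y + t • (-v))) :=
      ((itd_continuous v 2 g hg).comp hcontline).add
        ((itd_continuous (-v) 2 g hg).comp hcontline')
    have hf2bd : ∀ t ∈ Set.Icc (0:ℝ) 1,
        |itd v 2 g (y + t • v) + itd (-v) 2 g (y + t • (-v))|
          ≤ 2 * ((∑ i, |v i|)^2 * M) := by
      intro t _
      have hb1 := itd_bound v 2 g M hM0 hMb (y + t • v)
      have hb2 := itd_bound (-v) 2 g M hM0 hMb (y + t • (-v))
      rw [hWn] at hb2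
      calc |itd v 2 g (y + t • v) + itd (-v) 2 g (y + t • (-v))|
          ≤ |itd v 2 g (y + t • v)| + |itd (-v) 2 g (y + t • (-v))| := abs_add_le _ _
        _ ≤ 2 * ((∑ i, |v i|)^2 * M) := by linarith
    have htay := taylor_two
      (fun t : ℝ => itd v 0 g (y + t • v) + itd (-v) 0 g (y + t • (-v)))
      (fun t : ℝ => itd v 1 g (y + t • v) + itd (-v) 1 g (y + t • (-v)))
      (fun t : ℝ => itd v 2 g (y + t • v) + itd (-v) 2 g (y + t • (-v)))
      (fun t => hder 0 (by norm_num) t) (fun t => hder 1 (by norm_num) t)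
      hf2cont hf2bd
    simp only [one_smul, zero_smul, add_zero] at htay
    have h00 : ∀ (u w : Fin d → ℝ), itd u 0 g w = g w := fun _ _ => rfl
    rw [h00, h00, h00, h00, itd_neg v 1 g y] at htay
    have hW2v : (∑ i, |v i|)^2 = 2 * η * (∑ i, |z i|)^2 := by
      rw [hW, mul_pow, hc2]
    rw [hW2v] at htay
    have heq : g (y + c • z) + g (y - c • z) - 2 * g y
        = g (y + v) + g (y + -v) - (g y + g y) - (itd v 1 g y + (-1)^1 * itd v 1 g y) := by
      rw [hvdef, sub_eq_add_neg y (c • z)]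
      ring
    rw [heq]
    calc _ ≤ 2 * (2 * η * (∑ i, |z i|)^2 * M) := htay
      _ = 4 * η * M * (∑ i, |z i|)^2 := by ring
  have hA : Integrable (fun z => g (y + c • z) * φ z) := by
    apply Integrable.mono' (hφ.const_mul M)
    · exact ((hgcont.comp (by continuity)).aestronglyMeasurable).mul hφ.1
    · filter_upwards with z
      rw [norm_mul, Real.norm_eq_abs, Real.norm_eq_abs, abs_of_nonneg (hφ0 z)]
      exact mul_le_mul_of_nonneg_right (hgbd _) (hφ0 z)
  have hB : Integrable (fun z => g (y - c • z) * φ z) := by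
    apply Integrable.mono' (hφ.const_mul M)
    · exact ((hgcont.comp (by continuity)).aestronglyMeasurable).mul hφ.1
    · filter_upwards with z
      rw [norm_mul, Real.norm_eq_abs, Real.norm_eq_abs, abs_of_nonneg (hφ0 z)]
      exact mul_le_mul_of_nonneg_right (hgbd _) (hφ0 z)
  have hAB : (∫ z, g (y + c • z) * φ z) = ∫ z, g (y - c • z) * φ z := by
    rw [← integral_neg_eq_self (fun z => g (y + c • z) * φ z) volume]
    congr 1
    funext z
    rw [hφsym]
    congr 2
    rw [smul_neg]
    abel
  set R : (Fin d → ℝ) → ℝ :=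
    fun z => g (y + c • z) + g (y - c • z) - 2 * g y with hRdef
  have hRfun : (fun z => R z * φ z) = fun z =>
      (g (y + c • z) * φ z + g (y - c • z) * φ z) - (2 * g y) * φ z := by
    funext z
    rw [hRdef]
    ring
  have hRint : Integrable (fun z => R z * φ z) := by
    rw [hRfun]
    exact (hA.add hB).sub (hφ.const_mul _)
  have hRval : (∫ z, R z * φ z)
      = 2 * (∫ z, g (y - c • z) * φ z) - 2 * g y := by
    have hS1 : Integrable (fun z => g (y + c • z) * φ z + g (y - c • z) * φ z) := hA.add hB
    rw [hRfun, integral_sub hS1 (hφ.const_mul (2 * g y)), integral_add hA hB,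
      integral_const_mul, hφ1, hAB]
    ring
  have hRbd : |∫ z, R z * φ z| ≤ (4 * η * M) * ∫ z, (∑ i, |z i|)^2 * φ z := by
    have h0 : |∫ z, R z * φ z| ≤ ∫ z, |R z| * |φ z| := by
      have h00 := norm_integral_le_integral_norm (μ := volume) (fun z => R z * φ z)
      simp only [Real.norm_eq_abs, abs_mul] at h00
      exact h00
    have habs : Integrable (fun z => |R z| * |φ z|) := by
      simpa [abs_mul] using hRint.abs
    have h1 : (∫ z, |R z| * |φ z|) ≤ ∫ z, (4 * η * M) * ((∑ i, |z i|)^2 * φ z) := by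
      apply integral_mono habs (hW2.const_mul _)
      intro z
      show |R z| * |φ z| ≤ (4 * η * M) * ((∑ i, |z i|)^2 * φ z)
      rw [abs_of_nonneg (hφ0 z)]
      have h2 := mul_le_mul_of_nonneg_right (hptw z) (hφ0 z)
      calc |R z| * φ z ≤ 4 * η * M * (∑ i, |z i|)^2 * φ z := h2
        _ = (4 * η * M) * ((∑ i, |z i|)^2 * φ z) := by ring
    rw [integral_const_mul] at h1
    exact h0.trans h1
  rw [hRval] at hRbd
  rw [abs_le] at hRbd ⊢
  constructor <;> [skip; skip] <;> nlinarith [hRbd.1, hRbd.2]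

lemma pd_sum {d : ℕ} (h : Fin d → (Fin d → ℝ) → ℝ) (y : Fin d → ℝ) (i : Fin d)
    (hdiff : ∀ j, DifferentiableAt ℝ (h j) y) :
    pd i (fun x => ∑ j, h j x) y = ∑ j, pd i (h j) y := by
  unfold pd
  rw [fderiv_fun_sum (fun j _ => hdiff j)]
  simp

lemma pd_comm {d : ℕ} {h : (Fin d → ℝ) → ℝ} (hh : ContDiff ℝ (2:ℕ) h) (i j : Fin d) :
    pd i (pd j h) = pd j (pd i h) := by
  funext y
  have h1 : ContDiff ℝ (1:ℕ) (fderiv ℝ h) := hh.fderiv_right (by exact_mod_cast le_refl (2:ℕ))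
  have hd : DifferentiableAt ℝ (fderiv ℝ h) y :=
    (h1.differentiable (by norm_num)) y
  have key : ∀ a b : Fin d, pd a (pd b h) y
      = fderiv ℝ (fderiv ℝ h) y (Pi.single a 1) (Pi.single b 1) := by
    intro a b
    unfold pd
    rw [fderiv_clm_apply hd (differentiableAt_const _)]
    simp
  rw [key i j, key j i]
  have hsymm : IsSymmSndFDerivAt ℝ h y :=
    (hh.contDiffAt).isSymmSndFDerivAt (by simp)
  exact hsymm _ _

lemma diff_integral {d : ℕ} (g φ : (Fin d → ℝ) → ℝ) (hφ : Integrable φ) (hφ0 : ∀ z, 0 ≤ φ z)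
    (hg : ContDiff ℝ 1 g) {M0 M1 : ℝ} (hM1pos : 0 ≤ M1)
    (hM0 : ∀ x, |g x| ≤ M0) (hM1 : ∀ x i, |pd i g x| ≤ M1)
    (c : ℝ) (y : Fin d → ℝ) :
    DifferentiableAt ℝ (fun y' => ∫ z, g (y' - c • z) * φ z) y := by
  have hgd : Differentiable ℝ g := hg.differentiable (by norm_num)
  have hgc : Continuous g := hg.continuous
  have hfc : Continuous (fderiv ℝ g) := hg.continuous_fderiv (by norm_num)
  have hmap : ∀ x : Fin d → ℝ, Continuous fun z : Fin d → ℝ => x - c • z := by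
    intro x; continuity
  have haesm : ∀ x : Fin d → ℝ, AEStronglyMeasurable (fun z => g (x - c • z) * φ z) volume :=
    fun x => ((hgc.comp (hmap x)).aestronglyMeasurable).mul hφ.1
  have haesm' : AEStronglyMeasurable (fun z => φ z • fderiv ℝ g (y - c • z)) volume :=
    hφ.1.smul ((hfc.comp (hmap y)).aestronglyMeasurable)
  have hbound_int : Integrable (fun z => (d * M1) * φ z) volume := hφ.const_mul _
  have key := hasFDerivAt_integral_of_dominated_of_fderiv_le (μ := volume)
      (F := fun x z => g (x - c • z) * φ z)
      (F' := fun x z => φ z • fderiv ℝ g (x - c • z))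
      (x₀ := y) (bound := fun z => (d * M1) * φ z) (s := Metric.ball y 1) (Metric.ball_mem_nhds y zero_lt_one)
      (Filter.Eventually.of_forall fun x => haesm x)
      (Integrable.mono' (hφ.const_mul M0) (haesm y) ?_)
      haesm' ?_ hbound_int ?_
  · exact key.differentiableAt
  · filter_upwards with z
    rw [norm_mul, Real.norm_eq_abs, Real.norm_eq_abs, abs_of_nonneg (hφ0 z)]
    exact mul_le_mul_of_nonneg_right (hM0 _) (hφ0 z)
  · filter_upwards with z
    intro x _
    rw [show ‖φ z • fderiv ℝ g (x - c • z)‖ = ‖φ z‖ * ‖fderiv ℝ g (x - c • z)‖ from norm_smul _ _,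
      Real.norm_eq_abs, abs_of_nonneg (hφ0 z)]
    calc φ z * ‖fderiv ℝ g (x - c • z)‖ ≤ φ z * (d * M1) :=
          mul_le_mul_of_nonneg_left (opNorm_le_sum_pd hM1pos (fun j => hM1 _ j)) (hφ0 z)
      _ = (d * M1) * φ z := mul_comm _ _
  · filter_upwards with z
    intro x _
    have h1 : HasFDerivAt (fun x' : Fin d → ℝ => x' - c • z)
        (ContinuousLinearMap.id ℝ (Fin d → ℝ)) x := (hasFDerivAt_id x).sub_const _
    have h2 := ((hgd (x - c • z)).hasFDerivAt.comp x h1)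
    have h3 := h2.mul_const (φ z)
    simpa using h3

lemma eunorm_le_of_bounds {d : ℕ} (v : Fin d → ℝ) {B : ℝ} (hB : 0 ≤ B) (h : ∀ i, |v i| ≤ B) :
    eunorm v ≤ d * B := by
  have h1 : (∑ i, v i ^ 2) ≤ (d:ℝ) * B^2 := by
    calc ∑ i, v i^2 ≤ ∑ _i : Fin d, B^2 := by
          apply Finset.sum_le_sum
          intro i _
          have := h i
          nlinarith [abs_nonneg (v i), sq_abs (v i)]
      _ = (d:ℝ) * B^2 := by
          rw [Finset.sum_const, Finset.card_univ, Fintype.card_fin, nsmul_eq_mul]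
  have h2 : (d:ℝ) * B^2 ≤ ((d:ℝ) * B)^2 := by
    have hd2 : (d:ℝ) ≤ (d:ℝ)^2 := by
      rcases Nat.eq_zero_or_pos d with h0 | h0
      · simp [h0]
      · have : (1:ℝ) ≤ (d:ℝ) := by exact_mod_cast h0
        nlinarith
    nlinarith [sq_nonneg B]
  calc eunorm v = Real.sqrt (∑ i, v i^2) := rfl
    _ ≤ Real.sqrt (((d:ℝ) * B)^2) := Real.sqrt_le_sqrt (h1.trans h2)
    _ = (d:ℝ) * B := Real.sqrt_sq (by positivity)

/-- Higher-order expansion of the derivatives of the noisy density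
`q_η(y) = ∫ p(y - √(2η) z) φ(z) dz`:
`‖∇q_η - ∇p - η ∇Δp‖ ≤ C η²`, `|Δq_η - Δp - η Δ²p| ≤ C η²`, and
`‖∇Δq_η - ∇Δp‖ ≤ C η`, uniformly in `y`. -/
theorem convolution_expansion_derivatives_higher_order
    {d : ℕ} (hd : 0 < d)
    (p φ : (Fin d → ℝ) → ℝ)
    (hp0 : ∀ x, 0 ≤ p x) (hp1 : (∫ x, p x) = 1)
    (hφ0 : ∀ z, 0 ≤ φ z) (hφ1 : (∫ z, φ z) = 1)
    (hφsym : ∀ z, φ (-z) = φ z)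
    (hS : SmoothS 6 p)
    (hmom2 : ∀ i j, (∫ z, z i * z j * φ z) = if i = j then (1 : ℝ) else 0)
    (hmom4 : ∀ i, Integrable fun z => |z i| ^ 4 * φ z)
    (hmom4th : ∀ i j k l, (∫ z, z i * z j * z k * z l * φ z) =
      (if i = j then (1 : ℝ) else 0) * (if k = l then (1 : ℝ) else 0) +
        (if i = k then (1 : ℝ) else 0) * (if j = l then (1 : ℝ) else 0) +
        (if i = l then (1 : ℝ) else 0) * (if j = k then (1 : ℝ) else 0))
    (hmom6 : ∀ i, Integrable fun z => |z i| ^ 6 * φ z)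
 :
    ∃ C > (0 : ℝ), ∀ η ∈ Set.Ioo (0 : ℝ) 1, ∀ y : Fin d → ℝ,
      eunorm (grad (fun y' => ∫ z, p (y' - Real.sqrt (2 * η) • z) * φ z) y -
          grad p y - η • grad (fun x => lap p x) y) ≤ C * η ^ 2 ∧
      |lap (fun y' => ∫ z, p (y' - Real.sqrt (2 * η) • z) * φ z) y - lap p y -
          η * lap (fun x => lap p x) y| ≤ C * η ^ 2 ∧
      eunorm (grad (fun x =>
            lap (fun y' => ∫ z, p (y' - Real.sqrt (2 * η) • z) * φ z) x) y -
          grad (fun x => lap p x) y) ≤ C * η := by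
  classical
  have hφint : Integrable φ := by
    by_contra hcon
    rw [integral_undef hcon] at hφ1
    exact one_ne_zero hφ1.symm
  haveI : Finite {l : List (Fin d) // l.length ≤ 6} := (List.finite_length_le (Fin d) 6).to_subtype
  obtain ⟨M₁, hM₁⟩ := Finite.exists_le
    (fun lp : {l : List (Fin d) // l.length ≤ 6} => (hS.2 lp.1 lp.2).choose)
  set M : ℝ := max M₁ 1 with hMdef
  have hM1le : (1:ℝ) ≤ M := le_max_right _ _
  have hM0' : (0:ℝ) ≤ M := by linarith
  have hM : ∀ l : List (Fin d), l.length ≤ 6 → ∀ x, |pdl l p x| ≤ M := by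
    intro l hl x
    exact ((hS.2 l hl).choose_spec x).trans ((hM₁ ⟨l, hl⟩).trans (le_max_left _ _))
  have hp_cd : ∀ k : ℕ, k ≤ 6 → ContDiff ℝ (k:ℕ) p := fun k hk => hS.1.of_le (by exact_mod_cast hk)
  have hcd1 : ∀ k : ℕ, k ≤ 5 → ∀ i, ContDiff ℝ (k:ℕ) (pd i p) :=
    fun k hk i => (pd_contDiff (hp_cd (5+1) (by norm_num)) i).of_le (by exact_mod_cast hk)
  have hcd2 : ∀ k : ℕ, k ≤ 4 → ∀ i j, ContDiff ℝ (k:ℕ) (pd i (pd j p)) :=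
    fun k hk i j => (pd_contDiff (hcd1 (4+1) (by norm_num) j) i).of_le (by exact_mod_cast hk)
  have hcd3 : ∀ k : ℕ, k ≤ 3 → ∀ i j k', ContDiff ℝ (k:ℕ) (pd i (pd j (pd k' p))) :=
    fun k hk i j k' => (pd_contDiff (hcd2 (3+1) (by norm_num) j k') i).of_le (by exact_mod_cast hk)
  have hWcont : Continuous (fun z : Fin d → ℝ => ∑ i, |z i|) :=
    continuous_finset_sum _ (fun i _ => (continuous_apply i).abs)
  have hW4 : Integrable (fun z : Fin d → ℝ => (∑ i, |z i|)^4 * φ z) := by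
    apply Integrable.mono'
      ((integrable_finset_sum Finset.univ (fun i (_ : i ∈ Finset.univ) => hmom4 i)).const_mul
        ((d:ℝ)^3))
    · exact ((hWcont.pow 4).aestronglyMeasurable).mul hφint.1
    · filter_upwards with z
      have hb : (∑ i, |z i|)^4 ≤ (d:ℝ)^3 * ∑ i, |z i|^4 := by
        have hkey := pow_sum_div_card_le_sum_pow (s := Finset.univ)
          (f := fun i : Fin d => |z i|) (fun i _ => abs_nonneg _) 3
        rw [Finset.card_univ, Fintype.card_fin] at hkey
        have hd3 : (0:ℝ) < (d:ℝ)^3 := by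
          have : (0:ℝ) < (d:ℝ) := by exact_mod_cast hd
          positivity
        calc (∑ i, |z i|)^4 = ((∑ i, |z i|)^(3+1) / (d:ℝ)^3) * (d:ℝ)^3 := by
              field_simp
          _ ≤ (∑ i, |z i|^(3+1)) * (d:ℝ)^3 := mul_le_mul_of_nonneg_right hkey hd3.le
          _ = (d:ℝ)^3 * ∑ i, |z i|^4 := by rw [mul_comm]
      rw [Real.norm_eq_abs, abs_mul, abs_of_nonneg (hφ0 z), abs_of_nonneg (by positivity)]
      calc (∑ i, |z i|)^4 * φ z ≤ ((d:ℝ)^3 * ∑ i, |z i|^4) * φ z :=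
            mul_le_mul_of_nonneg_right hb (hφ0 z)
        _ = (d:ℝ)^3 * ∑ i, |z i|^4 * φ z := by rw [mul_assoc, Finset.sum_mul]
  have hW2 : Integrable (fun z : Fin d → ℝ => (∑ i, |z i|)^2 * φ z) := by
    apply Integrable.mono' (hφint.add hW4)
    · exact ((hWcont.pow 2).aestronglyMeasurable).mul hφint.1
    · filter_upwards with z
      simp only [Pi.add_apply]
      rw [Real.norm_eq_abs, abs_mul, abs_of_nonneg (hφ0 z), abs_of_nonneg (by positivity)]
      have hs : (0:ℝ) ≤ ∑ i, |z i| := Finset.sum_nonneg (fun i _ => abs_nonneg _)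
      have h1 : (∑ i, |z i|)^2 ≤ 1 + (∑ i, |z i|)^4 := by
        nlinarith [sq_nonneg ((∑ i, |z i|)^2 - 1), sq_nonneg (∑ i, |z i|)]
      calc (∑ i, |z i|)^2 * φ z ≤ (1 + (∑ i, |z i|)^4) * φ z :=
            mul_le_mul_of_nonneg_right h1 (hφ0 z)
        _ = φ z + (∑ i, |z i|)^4 * φ z := by ring
  have hzz : ∀ i j : Fin d, Integrable (fun z : Fin d → ℝ => z i * z j * φ z) := by
    intro i j
    apply Integrable.mono' (hφint.add hW4)
    · exact (((continuous_apply i).mul (continuous_apply j)).aestronglyMeasurable).mul hφint.1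
    · filter_upwards with z
      simp only [Pi.add_apply]
      rw [Real.norm_eq_abs, abs_mul, abs_of_nonneg (hφ0 z)]
      have hzi : |z i| ≤ ∑ k, |z k| :=
        Finset.single_le_sum (fun k _ => abs_nonneg (z k)) (Finset.mem_univ i)
      have hzj : |z j| ≤ ∑ k, |z k| :=
        Finset.single_le_sum (fun k _ => abs_nonneg (z k)) (Finset.mem_univ j)
      have hs : (0:ℝ) ≤ ∑ k, |z k| := Finset.sum_nonneg (fun k _ => abs_nonneg _)
      have h2 : |z i * z j| ≤ (∑ k, |z k|)^2 := by
        rw [abs_mul]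
        nlinarith [abs_nonneg (z i), abs_nonneg (z j)]
      have h3 : (∑ k, |z k|)^2 ≤ 1 + (∑ k, |z k|)^4 := by
        nlinarith [sq_nonneg ((∑ k, |z k|)^2 - 1), sq_nonneg (∑ k, |z k|)]
      calc |z i * z j| * φ z ≤ (1 + (∑ k, |z k|)^4) * φ z :=
            mul_le_mul_of_nonneg_right (h2.trans h3) (hφ0 z)
        _ = φ z + (∑ k, |z k|)^4 * φ z := by ring
  set K4 : ℝ := ∫ z : Fin d → ℝ, (∑ i, |z i|)^4 * φ z with hK4def
  set K2 : ℝ := ∫ z : Fin d → ℝ, (∑ i, |z i|)^2 * φ z with hK2def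
  have hK4nn : 0 ≤ K4 := integral_nonneg (fun z => mul_nonneg (by positivity) (hφ0 z))
  have hK2nn : 0 ≤ K2 := integral_nonneg (fun z => mul_nonneg (by positivity) (hφ0 z))
  have hd0 : (0:ℝ) ≤ (d:ℝ) := Nat.cast_nonneg d
  have ht1 : 0 ≤ (d:ℝ) * (4 * M * K4) :=
    mul_nonneg hd0 (mul_nonneg (mul_nonneg (by norm_num) hM0') hK4nn)
  have ht2 : 0 ≤ (d:ℝ)^2 * (2 * M * K2) :=
    mul_nonneg (by positivity) (mul_nonneg (mul_nonneg (by norm_num) hM0') hK2nn)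
  refine ⟨(d:ℝ) * (4 * M * K4) + (d:ℝ)^2 * (2 * M * K2) + 1, by linarith, ?_⟩
  intro η hηmem y
  obtain ⟨hη0, hη1⟩ := hηmem
  set C : ℝ := (d:ℝ) * (4 * M * K4) + (d:ℝ)^2 * (2 * M * K2) + 1 with hCdef
  have hPD1 : ∀ (x : Fin d → ℝ) (i : Fin d),
      pd i (fun y' => ∫ z, p (y' - Real.sqrt (2*η) • z) * φ z) x
        = ∫ z, pd i p (x - Real.sqrt (2*η) • z) * φ z := by
    intro x i
    exact pd_integral p φ hφint hφ0 (hp_cd 1 (by norm_num)) hM0'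
      (fun x' => hM [] (by norm_num) x') (fun x' i' => hM [i'] (by norm_num) x') _ i x
  have hPD2 : ∀ (i j : Fin d) (x : Fin d → ℝ),
      pd j (fun x' => ∫ z, pd i p (x' - Real.sqrt (2*η) • z) * φ z) x
        = ∫ z, pd j (pd i p) (x - Real.sqrt (2*η) • z) * φ z := by
    intro i j x
    exact pd_integral (pd i p) φ hφint hφ0 (hcd1 1 (by norm_num) i) hM0'
      (fun x' => hM [i] (by norm_num) x') (fun x' j' => hM [j', i] (by norm_num) x') _ j x
  have hPD3 : ∀ (i j k : Fin d) (x : Fin d → ℝ),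
      pd k (fun x' => ∫ z, pd i (pd j p) (x' - Real.sqrt (2*η) • z) * φ z) x
        = ∫ z, pd k (pd i (pd j p)) (x - Real.sqrt (2*η) • z) * φ z := by
    intro i j k x
    exact pd_integral (pd i (pd j p)) φ hφint hφ0 (hcd2 1 (by norm_num) i j) hM0'
      (fun x' => hM [i, j] (by norm_num) x') (fun x' k' => hM [k', i, j] (by norm_num) x') _ k x
  have hDIFF2 : ∀ (i j : Fin d) (x : Fin d → ℝ), DifferentiableAt ℝ
      (fun x' => ∫ z, pd i (pd j p) (x' - Real.sqrt (2*η) • z) * φ z) x := by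
    intro i j x
    exact diff_integral (pd i (pd j p)) φ hφint hφ0 (hcd2 1 (by norm_num) i j) hM0'
      (fun x' => hM [i, j] (by norm_num) x') (fun x' k' => hM [k', i, j] (by norm_num) x') _ x
  have hQ1 : ∀ i : Fin d, pd i (fun y' => ∫ z, p (y' - Real.sqrt (2*η) • z) * φ z)
      = fun x => ∫ z, pd i p (x - Real.sqrt (2*η) • z) * φ z :=
    fun i => funext (fun x => hPD1 x i)
  -- lemB instantiations
  have hLB1 : ∀ i : Fin d,
      |(∫ z, pd i p (y - Real.sqrt (2*η) • z) * φ z) - pd i p y - η * lap (pd i p) y|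
        ≤ (4*M*K4) * η^2 := by
    intro i
    have hMb : ∀ l : List (Fin d), l.length ≤ 4 → ∀ x, |pdl l (pd i p) x| ≤ M := by
      intro l hl x
      rw [← pdl_append]
      refine hM (l ++ [i]) ?_ x
      rw [List.length_append]
      simp
      omega
    exact lemB (pd i p) φ (hcd1 4 (by norm_num) i) hM0' hMb hφint hφ0 hφ1 hφsym hmom2 hzz hW4
      hη0 y
  have hLB2 : ∀ i : Fin d,
      |(∫ z, pd i (pd i p) (y - Real.sqrt (2*η) • z) * φ z) - pd i (pd i p) y
          - η * lap (pd i (pd i p)) y| ≤ (4*M*K4) * η^2 := by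
    intro i
    have hMb : ∀ l : List (Fin d), l.length ≤ 4 → ∀ x, |pdl l (pd i (pd i p)) x| ≤ M := by
      intro l hl x
      rw [← pdl_append, ← pdl_append]
      refine hM ((l ++ [i]) ++ [i]) ?_ x
      rw [List.length_append, List.length_append]
      simp
      omega
    exact lemB (pd i (pd i p)) φ (hcd2 4 (by norm_num) i i) hM0' hMb hφint hφ0 hφ1 hφsym hmom2
      hzz hW4 hη0 y
  have hLB3 : ∀ i j : Fin d,
      |(∫ z, pd i (pd j (pd j p)) (y - Real.sqrt (2*η) • z) * φ z) - pd i (pd j (pd j p)) y|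
        ≤ (2*M*K2) * η := by
    intro i j
    have hMb : ∀ l : List (Fin d), l.length ≤ 2 → ∀ x, |pdl l (pd i (pd j (pd j p))) x| ≤ M := by
      intro l hl x
      rw [← pdl_append, ← pdl_append, ← pdl_append]
      refine hM (((l ++ [i]) ++ [j]) ++ [j]) ?_ x
      rw [List.length_append, List.length_append, List.length_append]
      simp
      omega
    exact lemB2 (pd i (pd j (pd j p))) φ (hcd3 2 (by norm_num) i j j) hM0' hMb hφint hφ0 hφ1
      hφsym hW2 hη0 y
  -- differentiability of iterated partials at a point
  have hdiff2 : ∀ (i j : Fin d) (x : Fin d → ℝ), DifferentiableAt ℝ (pd i (pd j p)) x :=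
    fun i j x => (hcd2 1 (by norm_num) i j).differentiable (by norm_num) x
  have hdiff3 : ∀ (i j k : Fin d) (x : Fin d → ℝ), DifferentiableAt ℝ (pd i (pd j (pd k p))) x :=
    fun i j k x => (hcd3 1 (by norm_num) i j k).differentiable (by norm_num) x
  -- pd of laplacian as a sum
  have hpdlap : ∀ (i : Fin d) (x : Fin d → ℝ),
      pd i (fun x' => lap p x') x = ∑ j, pd i (pd j (pd j p)) x := by
    intro i x
    exact pd_sum (fun j => pd j (pd j p)) x i (fun j => hdiff2 j j x)
  -- Schwarz swap: lap (pd i p) = pd i (lap p)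
  have hswap : ∀ (i : Fin d) (x : Fin d → ℝ), lap (pd i p) x = pd i (fun x' => lap p x') x := by
    intro i x
    rw [hpdlap i x, lap]
    apply Finset.sum_congr rfl
    intro j _
    have s1 : pd i (pd j p) = pd j (pd i p) := pd_comm (hp_cd 2 (by norm_num)) i j
    have s2 : pd i (pd j (pd j p)) = pd j (pd i (pd j p)) :=
      pd_comm (hcd1 2 (by norm_num) j) i j
    rw [s2, s1]
  have hQ2 : ∀ i : Fin d,
      pd i (pd i (fun y' => ∫ z, p (y' - Real.sqrt (2*η) • z) * φ z)) y
        = ∫ z, pd i (pd i p) (y - Real.sqrt (2*η) • z) * φ z := by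
    intro i
    rw [hQ1 i]
    exact hPD2 i i y
  refine ⟨?_, ?_, ?_⟩
  · -- gradient claim
    have hbd : ∀ i : Fin d,
        |(grad (fun y' => ∫ z, p (y' - Real.sqrt (2 * η) • z) * φ z) y - grad p y
            - η • grad (fun x => lap p x) y) i| ≤ (4*M*K4) * η^2 := by
      intro i
      have hcomp : (grad (fun y' => ∫ z, p (y' - Real.sqrt (2 * η) • z) * φ z) y - grad p y
            - η • grad (fun x => lap p x) y) i
          = pd i (fun y' => ∫ z, p (y' - Real.sqrt (2 * η) • z) * φ z) y - pd i p y
            - η * pd i (fun x => lap p x) y := by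
        simp [grad]
      rw [hcomp, hPD1 y i, ← hswap i y]
      exact hLB1 i
    have hB0 : (0:ℝ) ≤ (4*M*K4) * η^2 :=
      mul_nonneg (mul_nonneg (mul_nonneg (by norm_num) hM0') hK4nn) (sq_nonneg η)
    calc eunorm _ ≤ (d:ℝ) * ((4*M*K4) * η^2) := eunorm_le_of_bounds _ hB0 hbd
      _ ≤ C * η^2 := by
          have : (d:ℝ) * (4*M*K4) ≤ C := by
            rw [hCdef]
            nlinarith [ht2]
          nlinarith [sq_nonneg η, this, ht1, ht2]
  · -- laplacian claim
    have hpd2lap : ∀ (j : Fin d) (x : Fin d → ℝ),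
        pd j (pd j (fun x' => lap p x')) x = ∑ i, pd j (pd j (pd i (pd i p))) x := by
      intro j x
      have e1 : pd j (fun x' => lap p x') = fun x' => ∑ i, pd j (pd i (pd i p)) x' :=
        funext (fun x' => hpdlap j x')
      rw [e1]
      exact pd_sum (fun i => pd j (pd i (pd i p))) x j (fun i => hdiff3 j i i x)
    have hll : lap (fun x => lap p x) y = ∑ i, lap (pd i (pd i p)) y := by
      calc lap (fun x => lap p x) y = ∑ j, pd j (pd j (fun x => lap p x)) y := rfl
        _ = ∑ j, ∑ i, pd j (pd j (pd i (pd i p))) y :=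
            Finset.sum_congr rfl (fun j _ => hpd2lap j y)
        _ = ∑ i, ∑ j, pd j (pd j (pd i (pd i p))) y := Finset.sum_comm
        _ = ∑ i, lap (pd i (pd i p)) y := rfl
    have hsplit : lap (fun y' => ∫ z, p (y' - Real.sqrt (2 * η) • z) * φ z) y - lap p y
          - η * lap (fun x => lap p x) y
        = ∑ i, ((∫ z, pd i (pd i p) (y - Real.sqrt (2*η) • z) * φ z) - pd i (pd i p) y
            - η * lap (pd i (pd i p)) y) := by
      rw [hll,
        show lap (fun y' => ∫ z, p (y' - Real.sqrt (2 * η) • z) * φ z) y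
          = ∑ i, pd i (pd i (fun y' => ∫ z, p (y' - Real.sqrt (2*η) • z) * φ z)) y from rfl,
        show lap p y = ∑ i, pd i (pd i p) y from rfl,
        Finset.mul_sum, ← Finset.sum_sub_distrib, ← Finset.sum_sub_distrib]
      apply Finset.sum_congr rfl
      intro i _
      rw [hQ2 i]
    rw [hsplit]
    calc |∑ i, ((∫ z, pd i (pd i p) (y - Real.sqrt (2*η) • z) * φ z) - pd i (pd i p) y
            - η * lap (pd i (pd i p)) y)|
        ≤ ∑ i, |(∫ z, pd i (pd i p) (y - Real.sqrt (2*η) • z) * φ z) - pd i (pd i p) y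
            - η * lap (pd i (pd i p)) y| := Finset.abs_sum_le_sum_abs _ _
      _ ≤ ∑ _i : Fin d, (4*M*K4) * η^2 := Finset.sum_le_sum (fun i _ => hLB2 i)
      _ = (d:ℝ) * ((4*M*K4) * η^2) := by
          rw [Finset.sum_const, Finset.card_univ, Fintype.card_fin, nsmul_eq_mul]
      _ ≤ C * η^2 := by
          have : (d:ℝ) * (4*M*K4) ≤ C := by
            rw [hCdef]
            nlinarith [ht2]
          nlinarith [sq_nonneg η, this, ht1, ht2]
  · -- gradient of laplacian claim
    have e3 : ∀ j : Fin d,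
        pd j (pd j (fun y' => ∫ z, p (y' - Real.sqrt (2*η) • z) * φ z))
          = fun x => ∫ z, pd j (pd j p) (x - Real.sqrt (2*η) • z) * φ z := by
      intro j
      rw [hQ1 j]
      exact funext (fun x => hPD2 j j x)
    have e4 : (fun x => lap (fun y' => ∫ z, p (y' - Real.sqrt (2 * η) • z) * φ z) x)
        = fun x => ∑ j, (fun x' => ∫ z, pd j (pd j p) (x' - Real.sqrt (2*η) • z) * φ z) x := by
      funext x
      show ∑ j, pd j (pd j (fun y' => ∫ z, p (y' - Real.sqrt (2*η) • z) * φ z)) x = _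
      exact Finset.sum_congr rfl (fun j _ => by rw [e3 j])
    have hgradlapQ : ∀ i : Fin d,
        pd i (fun x => lap (fun y' => ∫ z, p (y' - Real.sqrt (2 * η) • z) * φ z) x) y
          = ∑ j, ∫ z, pd i (pd j (pd j p)) (y - Real.sqrt (2*η) • z) * φ z := by
      intro i
      rw [e4, pd_sum _ y i (fun j => hDIFF2 j j y)]
      exact Finset.sum_congr rfl (fun j _ => hPD3 j j i y)
    have hbd : ∀ i : Fin d,
        |(grad (fun x => lap (fun y' => ∫ z, p (y' - Real.sqrt (2 * η) • z) * φ z) x) y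
            - grad (fun x => lap p x) y) i| ≤ (d:ℝ) * ((2*M*K2) * η) := by
      intro i
      have hcomp : (grad (fun x => lap (fun y' => ∫ z, p (y' - Real.sqrt (2 * η) • z) * φ z) x) y
            - grad (fun x => lap p x) y) i
          = pd i (fun x => lap (fun y' => ∫ z, p (y' - Real.sqrt (2 * η) • z) * φ z) x) y
            - pd i (fun x => lap p x) y := by
        simp [grad]
      rw [hcomp, hgradlapQ i, hpdlap i y, ← Finset.sum_sub_distrib]
      calc |∑ j, ((∫ z, pd i (pd j (pd j p)) (y - Real.sqrt (2*η) • z) * φ z)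
              - pd i (pd j (pd j p)) y)|
          ≤ ∑ j, |(∫ z, pd i (pd j (pd j p)) (y - Real.sqrt (2*η) • z) * φ z)
              - pd i (pd j (pd j p)) y| := Finset.abs_sum_le_sum_abs _ _
        _ ≤ ∑ _j : Fin d, (2*M*K2) * η := Finset.sum_le_sum (fun j _ => hLB3 i j)
        _ = (d:ℝ) * ((2*M*K2) * η) := by
            rw [Finset.sum_const, Finset.card_univ, Fintype.card_fin, nsmul_eq_mul]
    have hB0 : (0:ℝ) ≤ (d:ℝ) * ((2*M*K2) * η) :=
      mul_nonneg hd0 (mul_nonneg (mul_nonneg (mul_nonneg (by norm_num) hM0') hK2nn) hη0.le)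
    calc eunorm _ ≤ (d:ℝ) * ((d:ℝ) * ((2*M*K2) * η)) := eunorm_le_of_bounds _ hB0 hbd
      _ ≤ C * η := by
          have : (d:ℝ)^2 * (2*M*K2) ≤ C := by
            rw [hCdef]
            nlinarith [ht1]
          nlinarith [hη0.le, this, ht1, ht2]
end
end
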